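/- Let (x, z, y) be a vertex solution (extreme point) of the polytope P = LP_RRST(E_X, V_X, E_Y, V_Y, E_Z, L) such that x_e > 0 for every e ∈ E_X, y_e > 0 for every e ∈ E_Y, and z_e > 0 for every e ∈ E_Z. Then there exist nonempty laminar families L(x) ⊆ F(x) and L(y) ⊆ F(y) and subsets E(x,z) ⊆ E(x,z)* and E(z,y) ⊆ E(z,y)* such that: (i) |E_X| + |E_Z| + |E_Y| = |L(x)| + |E(x,z)| + |E(z,y)| + |L(y)| + 1; and (ii) the vectors in {χ_X(E_X(U)) : U ∈ L(x)} ∪ {χ_Y(E_Y(U)) : U ∈ L(y)} ∪ {−χ_X({e}) + χ_Z({e}) : e ∈ E(x,z)} ∪ {χ_Z({e}) − χ_Y({e}) : e ∈ E(z,y)} ∪ {χ_Z(E_Z)} are linearly independent. -/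

import Mathlib

open Finset

/-- The set `E(U)` of edges of `E` having both endpoints in `U`
(edges are given by an endpoint map `p`). -/
def edgesIn {V ε : Type*} [DecidableEq V] (p : ε → V × V)
    (E : Finset ε) (U : Finset V) : Finset ε :=
  E.filter fun e => (p e).1 ∈ U ∧ (p e).2 ∈ U

/-- The (multi)graph on vertex set `V` with edge set `E` (endpoints given by `p`)
is connected: every nonempty proper vertex subset is left by some edge. -/
def ConnectedOn {V ε : Type*} [Fintype V] [DecidableEq V]
    (p : ε → V × V) (E : Finset ε) : Prop :=
  ∀ U : Finset V, U.Nonempty → U ≠ Finset.univ →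
    ∃ e ∈ E, ((p e).1 ∈ U ∧ (p e).2 ∉ U) ∨ ((p e).1 ∉ U ∧ (p e).2 ∈ U)

/-- The characteristic vector of a finset of edges. -/
def chi {ε : Type*} [DecidableEq ε] (S : Finset ε) : ε → ℝ :=
  fun e => if e ∈ S then 1 else 0

/-- A family of sets is laminar if no two of its members are intersecting,
i.e. any two members are nested or disjoint. -/
def LaminarFamily {V : Type*} [DecidableEq V] (𝒜 : Finset (Finset V)) : Prop :=
  ∀ A ∈ 𝒜, ∀ B ∈ 𝒜, A ⊆ B ∨ B ⊆ A ∨ A ∩ B = ∅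

/-- The feasible region of the linear program `LP_RRST(E_X, V_X, E_Y, V_Y, E_Z, L)`,
viewed inside `ℝ^{E_X} × ℝ^{E_Z} × ℝ^{E_Y}` (coordinates outside the respective edge
sets are fixed to `0`). -/
def LP_RRST {V W ε : Type*} [Fintype V] [Fintype W] [DecidableEq V] [DecidableEq W]
    [DecidableEq ε]
    (pX : ε → V × V) (pY : ε → W × W) (EX EY EZ : Finset ε) (L : ℕ) :
    Set ((ε → ℝ) × (ε → ℝ) × (ε → ℝ)) :=
  {q | (∀ e, 0 ≤ q.1 e) ∧ (∀ e, 0 ≤ q.2.1 e) ∧ (∀ e, 0 ≤ q.2.2 e) ∧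
       (∀ e ∉ EX, q.1 e = 0) ∧ (∀ e ∉ EZ, q.2.1 e = 0) ∧ (∀ e ∉ EY, q.2.2 e = 0) ∧
       (∑ e ∈ EX, q.1 e = (Fintype.card V : ℝ) - 1) ∧
       (∀ U : Finset V, U.Nonempty → U ≠ Finset.univ →
         ∑ e ∈ edgesIn pX EX U, q.1 e ≤ (U.card : ℝ) - 1) ∧
       (∀ e ∈ EX ∩ EZ, q.2.1 e ≤ q.1 e) ∧
       (∑ e ∈ EZ, q.2.1 e = (L : ℝ)) ∧
       (∀ e ∈ EY ∩ EZ, q.2.1 e ≤ q.2.2 e) ∧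
       (∑ e ∈ EY, q.2.2 e = (Fintype.card W : ℝ) - 1) ∧
       (∀ U : Finset W, U.Nonempty → U ≠ Finset.univ →
         ∑ e ∈ edgesIn pY EY U, q.2.2 e ≤ (U.card : ℝ) - 1)}

/-- crossing pair of sets -/
def Crossing {V : Type*} [DecidableEq V] (A B : Finset V) : Prop :=
  (A ∩ B).Nonempty ∧ (A \ B).Nonempty ∧ (B \ A).Nonempty

/-- the set of edges crossing between A\B and B\A -/
def crossEdges {V ε : Type*} [DecidableEq V] [DecidableEq ε] (p : ε → V × V)
    (E : Finset ε) (A B : Finset V) : Finset ε :=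
  E.filter fun e => ((p e).1 ∈ A \ B ∧ (p e).2 ∈ B \ A) ∨ ((p e).1 ∈ B \ A ∧ (p e).2 ∈ A \ B)

lemma edgesIn_subset {V ε : Type*} [DecidableEq V] (p : ε → V × V)
    (E : Finset ε) (U : Finset V) : edgesIn p E U ⊆ E := Finset.filter_subset _ _

lemma edgesIn_univ {V ε : Type*} [Fintype V] [DecidableEq V] (p : ε → V × V)
    (E : Finset ε) : edgesIn p E Finset.univ = E := by
  simp [edgesIn]

lemma sum_edgesIn_uncross {V ε : Type*} [DecidableEq V] [DecidableEq ε]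
    (p : ε → V × V) (E : Finset ε) (x : ε → ℝ) (A B : Finset V) :
    ∑ e ∈ edgesIn p E (A ∩ B), x e + ∑ e ∈ edgesIn p E (A ∪ B), x e
      = ∑ e ∈ edgesIn p E A, x e + ∑ e ∈ edgesIn p E B, x e
        + ∑ e ∈ crossEdges p E A B, x e := by
  unfold edgesIn crossEdges
  rw [Finset.sum_filter, Finset.sum_filter, Finset.sum_filter, Finset.sum_filter,
    Finset.sum_filter, ← Finset.sum_add_distrib, ← Finset.sum_add_distrib,
    ← Finset.sum_add_distrib]
  refine Finset.sum_congr rfl fun e _ => ?_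
  by_cases h1 : (p e).1 ∈ A <;> by_cases h2 : (p e).1 ∈ B <;>
    by_cases h3 : (p e).2 ∈ A <;> by_cases h4 : (p e).2 ∈ B <;>
    simp [h1, h2, h3, h4]

lemma chi_uncross {V ε : Type*} [DecidableEq V] [DecidableEq ε]
    (p : ε → V × V) (E : Finset ε) (A B : Finset V)
    (hC : crossEdges p E A B = ∅) :
    chi (edgesIn p E (A ∩ B)) + chi (edgesIn p E (A ∪ B))
      = chi (edgesIn p E A) + chi (edgesIn p E B) := by
  funext e
  by_cases he : e ∈ E
  · have hnc : ¬ (((p e).1 ∈ A \ B ∧ (p e).2 ∈ B \ A) ∨ ((p e).1 ∈ B \ A ∧ (p e).2 ∈ A \ B)) := by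
      intro h
      have : e ∈ crossEdges p E A B := Finset.mem_filter.2 ⟨he, h⟩
      simp [hC] at this
    simp only [Pi.add_apply, chi, edgesIn, Finset.mem_filter, he, true_and]
    simp only [Finset.mem_sdiff] at hnc
    by_cases h1 : (p e).1 ∈ A <;> by_cases h2 : (p e).1 ∈ B <;>
      by_cases h3 : (p e).2 ∈ A <;> by_cases h4 : (p e).2 ∈ B <;>
      simp [h1, h2, h3, h4] at hnc ⊢
  · simp [Pi.add_apply, chi, edgesIn, Finset.mem_filter, he]

lemma not_crossing_iff {V : Type*} [DecidableEq V] (A B : Finset V) :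
    ¬ Crossing A B ↔ (A ⊆ B ∨ B ⊆ A ∨ A ∩ B = ∅) := by
  unfold Crossing
  rw [← Finset.sdiff_eq_empty_iff_subset, ← Finset.sdiff_eq_empty_iff_subset,
    ← Finset.not_nonempty_iff_eq_empty, ← Finset.not_nonempty_iff_eq_empty,
    ← Finset.not_nonempty_iff_eq_empty]
  tauto

lemma tight_uncross {V ε : Type*} [Fintype V] [DecidableEq V] [DecidableEq ε]
    (p : ε → V × V) (E : Finset ε) (x : ε → ℝ)
    (hpos : ∀ e ∈ E, 0 < x e)
    (hsum : ∑ e ∈ E, x e = (Fintype.card V : ℝ) - 1)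
    (hsub : ∀ U : Finset V, U.Nonempty → U ≠ Finset.univ →
      ∑ e ∈ edgesIn p E U, x e ≤ (U.card : ℝ) - 1)
    {A B : Finset V}
    (hA : ∑ e ∈ edgesIn p E A, x e = (A.card : ℝ) - 1)
    (hB : ∑ e ∈ edgesIn p E B, x e = (B.card : ℝ) - 1)
    (hcr : Crossing A B) :
    (∑ e ∈ edgesIn p E (A ∩ B), x e = ((A ∩ B).card : ℝ) - 1) ∧
    (∑ e ∈ edgesIn p E (A ∪ B), x e = ((A ∪ B).card : ℝ) - 1) ∧
    chi (edgesIn p E (A ∩ B)) + chi (edgesIn p E (A ∪ B))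
      = chi (edgesIn p E A) + chi (edgesIn p E B) := by
  have hbd : ∀ U : Finset V, U.Nonempty → ∑ e ∈ edgesIn p E U, x e ≤ (U.card : ℝ) - 1 := by
    intro U hU
    by_cases h : U = Finset.univ
    · subst h
      rw [edgesIn_univ, hsum, Finset.card_univ]
    · exact hsub U hU h
  have hIne : (A ∩ B).Nonempty := hcr.1
  have hUne : (A ∪ B).Nonempty := hIne.mono (Finset.inter_subset_union)
  have hcard : ((A ∩ B).card : ℝ) + ((A ∪ B).card : ℝ) = (A.card : ℝ) + (B.card : ℝ) := by
    exact_mod_cast congrArg (Nat.cast : ℕ → ℝ) (Finset.card_inter_add_card_union A B)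
  have hsupmod := sum_edgesIn_uncross p E x A B
  have hCnonneg : 0 ≤ ∑ e ∈ crossEdges p E A B, x e :=
    Finset.sum_nonneg fun e he => (hpos e (Finset.filter_subset _ _ he)).le
  have hI := hbd _ hIne
  have hU := hbd _ hUne
  have hC0 : ∑ e ∈ crossEdges p E A B, x e = 0 := by linarith
  have hItight : ∑ e ∈ edgesIn p E (A ∩ B), x e = ((A ∩ B).card : ℝ) - 1 := by linarith
  have hUtight : ∑ e ∈ edgesIn p E (A ∪ B), x e = ((A ∪ B).card : ℝ) - 1 := by linarith
  refine ⟨hItight, hUtight, ?_⟩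
  apply chi_uncross
  by_contra hne
  obtain ⟨e, he⟩ := Finset.nonempty_iff_ne_empty.2 hne
  have : 0 < ∑ e ∈ crossEdges p E A B, x e :=
    Finset.sum_pos (fun e' he' => hpos e' (Finset.filter_subset _ _ he')) ⟨e, he⟩
  linarith

lemma laminar_span_lemma {V : Type*} [Fintype V] [DecidableEq V]
    {M : Type*} [AddCommGroup M] [Module ℝ M]
    (F : Finset (Finset V)) (v : Finset V → M)
    (hccl : ∀ A ∈ F, ∀ B ∈ F, Crossing A B →
      A ∩ B ∈ F ∧ A ∪ B ∈ F ∧ v (A ∩ B) + v (A ∪ B) = v A + v B)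
    (huniv : Finset.univ ∈ F) :
    ∃ ℒ : Finset (Finset V), ℒ ⊆ F ∧ LaminarFamily ℒ ∧ Finset.univ ∈ ℒ ∧
      ∀ U ∈ F, v U ∈ Submodule.span ℝ (v '' ↑ℒ) := by
  classical
  obtain ⟨ℒ, hmem, hmax⟩ := Finset.exists_max_image
    (F.powerset.filter (fun ℒ => LaminarFamily ℒ)) Finset.card
    ⟨∅, Finset.mem_filter.2 ⟨Finset.empty_mem_powerset _, by simp [LaminarFamily]⟩⟩
  rw [Finset.mem_filter, Finset.mem_powerset] at hmem
  obtain ⟨hsub', hlam⟩ := hmem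
  have hins : ∀ U ∈ F, (∀ A ∈ ℒ, ¬ Crossing A U) → U ∈ ℒ := by
    intro U hUF hcomp
    by_contra hUL
    have hlam' : LaminarFamily (insert U ℒ) := by
      intro A hA B hB
      rcases Finset.mem_insert.1 hA with h1 | h1 <;>
        rcases Finset.mem_insert.1 hB with h2 | h2
      · rw [h1, h2]; left; exact Finset.Subset.refl _
      · rw [h1]
        have := (not_crossing_iff B U).1 (hcomp B h2)
        rcases this with h | h | h
        · right; left; exact h
        · left; exact h
        · right; right; rwa [Finset.inter_comm]
      · rw [h2]
        exact (not_crossing_iff A U).1 (hcomp A h1)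
      · exact hlam A h1 B h2
    have hle := hmax (insert U ℒ) (by
      rw [Finset.mem_filter, Finset.mem_powerset]
      exact ⟨Finset.insert_subset hUF hsub', hlam'⟩)
    rw [Finset.card_insert_of_notMem hUL] at hle
    omega
  have huniv' : Finset.univ ∈ ℒ := by
    apply hins _ huniv
    intro A hA hcr
    have := hcr.2.1
    rw [Finset.sdiff_eq_empty_iff_subset.2 (Finset.subset_univ A)] at this
    exact Finset.not_nonempty_empty this
  refine ⟨ℒ, hsub', hlam, huniv', ?_⟩
  suffices H : ∀ n : ℕ, ∀ U ∈ F, (ℒ.filter (fun A => Crossing A U)).card ≤ n →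
      v U ∈ Submodule.span ℝ (v '' ↑ℒ) by
    intro U hU
    exact H _ U hU le_rfl
  intro n
  induction n with
  | zero =>
    intro U hUF hcount
    have hU : U ∈ ℒ := by
      apply hins U hUF
      intro A hA hcr
      have h1 : A ∈ ℒ.filter (fun A => Crossing A U) := Finset.mem_filter.2 ⟨hA, hcr⟩
      have := Finset.card_pos.2 ⟨A, h1⟩
      omega
    exact Submodule.subset_span ⟨U, by simpa using hU, rfl⟩
  | succ n ih =>
    intro U hUF hcount
    by_cases hc : (ℒ.filter (fun A => Crossing A U)).card ≤ n
    · exact ih U hUF hc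
    have hne : (ℒ.filter (fun A => Crossing A U)).Nonempty := by
      rw [← Finset.card_pos]; omega
    obtain ⟨A, hA⟩ := hne
    rw [Finset.mem_filter] at hA
    obtain ⟨hAL, hAcr⟩ := hA
    have hAF : A ∈ F := hsub' hAL
    obtain ⟨hIF, hUF', hident⟩ := hccl A hAF U hUF hAcr
    have key : ∀ C : Finset V, (∀ B ∈ ℒ, Crossing B C → Crossing B U ∧ B ≠ A) →
        (ℒ.filter (fun B => Crossing B C)).card ≤ n := by
      intro C hkey
      have hss : ℒ.filter (fun B => Crossing B C) ⊆
          (ℒ.filter (fun B => Crossing B U)).erase A := by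
        intro B hB
        rw [Finset.mem_filter] at hB
        obtain ⟨h1, h2⟩ := hkey B hB.1 hB.2
        exact Finset.mem_erase.2 ⟨h2, Finset.mem_filter.2 ⟨hB.1, h1⟩⟩
      have hcc := Finset.card_le_card hss
      have hce := Finset.card_erase_of_mem
        (Finset.mem_filter.2 ⟨hAL, hAcr⟩ :
          A ∈ ℒ.filter (fun A => Crossing A U))
      omega
    have hAU1 : ¬ (A \ U) = ∅ := fun h =>
      Finset.not_nonempty_empty (h ▸ hAcr.2.1)
    have hUA1 : (A ∩ U).Nonempty := hAcr.1
    have claim1 : ∀ B ∈ ℒ, Crossing B (A ∩ U) → Crossing B U ∧ B ≠ A := by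
      intro B hBL hcr
      obtain ⟨h1, h2, h3⟩ := hcr
      constructor
      · refine ⟨h1.mono (by intro a ha; simp at ha ⊢; tauto),
          ?_, h3.mono (by intro a ha; simp at ha ⊢; tauto)⟩
        by_contra hBU
        rw [Finset.not_nonempty_iff_eq_empty, Finset.sdiff_eq_empty_iff_subset] at hBU
        rcases hlam B hBL A hAL with h | h | h
        · have hsubI : B ⊆ A ∩ U := Finset.subset_inter h hBU
          rw [Finset.sdiff_eq_empty_iff_subset.2 hsubI] at h2
          exact Finset.not_nonempty_empty h2
        · have hAU : A ⊆ U := h.trans hBU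
          exact hAU1 (Finset.sdiff_eq_empty_iff_subset.2 hAU)
        · obtain ⟨a, ha⟩ := h1
          simp only [Finset.mem_inter] at ha
          have hm : a ∈ B ∩ A := Finset.mem_inter.2 ⟨ha.1, ha.2.1⟩
          rw [h] at hm
          exact absurd hm (Finset.notMem_empty a)
      · rintro rfl
        rw [Finset.sdiff_eq_empty_iff_subset.2 (Finset.inter_subset_left)] at h3
        exact Finset.not_nonempty_empty h3
    have claim2 : ∀ B ∈ ℒ, Crossing B (A ∪ U) → Crossing B U ∧ B ≠ A := by
      intro B hBL hcr
      obtain ⟨h1, h2, h3⟩ := hcr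
      have hBnotsubA : ¬ B ⊆ A := by
        intro h
        obtain ⟨b, hb⟩ := h2
        simp only [Finset.mem_sdiff, Finset.mem_union] at hb
        exact hb.2 (Or.inl (h hb.1))
      constructor
      · refine ⟨?_, h2.mono (by intro a ha; simp at ha ⊢; tauto), ?_⟩
        · rcases hlam B hBL A hAL with h | h | h
          · exact absurd h hBnotsubA
          · exact hUA1.mono (Finset.inter_subset_inter h (Finset.Subset.refl _))
          · obtain ⟨a, ha⟩ := h1
            simp only [Finset.mem_inter, Finset.mem_union] at ha
            rcases ha.2 with haA | haU
            · have hm : a ∈ B ∩ A := Finset.mem_inter.2 ⟨ha.1, haA⟩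
              rw [h] at hm
              exact absurd hm (Finset.notMem_empty a)
            · exact ⟨a, Finset.mem_inter.2 ⟨ha.1, haU⟩⟩
        · by_contra hUB
          rw [Finset.not_nonempty_iff_eq_empty, Finset.sdiff_eq_empty_iff_subset] at hUB
          rcases hlam B hBL A hAL with h | h | h
          · exact absurd h hBnotsubA
          · have hsubB : A ∪ U ⊆ B := Finset.union_subset h hUB
            rw [Finset.sdiff_eq_empty_iff_subset.2 hsubB] at h3
            exact Finset.not_nonempty_empty h3
          · obtain ⟨a, ha⟩ := hUA1
            simp only [Finset.mem_inter] at ha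
            have hm : a ∈ B ∩ A := Finset.mem_inter.2 ⟨hUB ha.2, ha.1⟩
            rw [h] at hm
            exact absurd hm (Finset.notMem_empty a)
      · rintro rfl
        rw [Finset.sdiff_eq_empty_iff_subset.2 (Finset.subset_union_left)] at h2
        exact Finset.not_nonempty_empty h2
    have hcrAI : Crossing A U ↔ Crossing A U := Iff.rfl
    have h1 : v (A ∩ U) ∈ Submodule.span ℝ (v '' ↑ℒ) := ih _ hIF (key _ claim1)
    have h2 : v (A ∪ U) ∈ Submodule.span ℝ (v '' ↑ℒ) := ih _ hUF' (key _ claim2)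
    have h3 : v A ∈ Submodule.span ℝ (v '' ↑ℒ) :=
      Submodule.subset_span ⟨A, by simpa using hAL, rfl⟩
    have hVU : v U = v (A ∩ U) + v (A ∪ U) - v A := by
      rw [hident]; abel
    rw [hVU]
    exact sub_mem (add_mem h1 h2) h3

abbrev Trip (ε : Type*) := (ε → ℝ) × (ε → ℝ) × (ε → ℝ)

lemma chi_apply_mem {ε : Type*} [DecidableEq ε] {S : Finset ε} {e : ε} (h : e ∈ S) :
    chi S e = 1 := if_pos h

lemma chi_apply_not_mem {ε : Type*} [DecidableEq ε] {S : Finset ε} {e : ε} (h : e ∉ S) :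
    chi S e = 0 := if_neg h

lemma chi_ne_zero {ε : Type*} [DecidableEq ε] {S : Finset ε} (h : S.Nonempty) :
    chi S ≠ (0 : ε → ℝ) := by
  obtain ⟨e, he⟩ := h
  intro h0
  have := congrFun h0 e
  rw [chi_apply_mem he] at this
  norm_num at this

lemma chi_singleton_inj {ε : Type*} [DecidableEq ε] {e e' : ε}
    (h : chi ({e} : Finset ε) = chi {e'}) : e = e' := by
  have := congrFun h e
  rw [chi_apply_mem (Finset.mem_singleton_self e)] at this
  by_contra hne
  rw [chi_apply_not_mem (by simp [eq_comm, Ne, hne] : e ∉ ({e'} : Finset ε))] at this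
  norm_num at this

lemma sum_mul_chi {ε : Type*} [DecidableEq ε] (E A : Finset ε) (f : ε → ℝ) (h : A ⊆ E) :
    ∑ e ∈ E, f e * chi A e = ∑ e ∈ A, f e := by
  unfold chi
  simp only [mul_ite, mul_one, mul_zero]
  rw [Finset.sum_ite_mem, Finset.inter_eq_right.2 h]

noncomputable def PhiB {ε : Type*} (EX EZ EY : Finset ε) : Trip ε →ₗ[ℝ] Trip ε →ₗ[ℝ] ℝ :=
  LinearMap.mk₂ ℝ (fun d s => ∑ e ∈ EX, d.1 e * s.1 e + ∑ e ∈ EZ, d.2.1 e * s.2.1 e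
      + ∑ e ∈ EY, d.2.2 e * s.2.2 e)
    (by
      intro m m' s
      simp only [Prod.fst_add, Prod.snd_add, Pi.add_apply, add_mul, Finset.sum_add_distrib]
      ring)
    (by
      intro c m s
      simp only [Prod.smul_fst, Prod.smul_snd, Pi.smul_apply, smul_eq_mul, Finset.mul_sum,
        mul_assoc, mul_add])
    (by
      intro m s s'
      simp only [Prod.fst_add, Prod.snd_add, Pi.add_apply, mul_add, Finset.sum_add_distrib]
      ring)
    (by
      intro c m s
      simp only [Prod.smul_fst, Prod.smul_snd, Pi.smul_apply, smul_eq_mul, Finset.mul_sum,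
        mul_left_comm, mul_add])

def suppSub {ε : Type*} (EX EZ EY : Finset ε) : Submodule ℝ (Trip ε) where
  carrier := {q | (∀ e ∉ EX, q.1 e = 0) ∧ (∀ e ∉ EZ, q.2.1 e = 0) ∧ (∀ e ∉ EY, q.2.2 e = 0)}
  add_mem' := by
    rintro a b ⟨ha1, ha2, ha3⟩ ⟨hb1, hb2, hb3⟩
    exact ⟨fun e he => by simp [ha1 e he, hb1 e he],
      fun e he => by simp [ha2 e he, hb2 e he],
      fun e he => by simp [ha3 e he, hb3 e he]⟩
  zero_mem' := ⟨fun e _ => rfl, fun e _ => rfl, fun e _ => rfl⟩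
  smul_mem' := by
    rintro c q ⟨h1, h2, h3⟩
    exact ⟨fun e he => by simp [h1 e he], fun e he => by simp [h2 e he],
      fun e he => by simp [h3 e he]⟩

lemma mem_suppSub {ε : Type*} {EX EZ EY : Finset ε} {q : Trip ε} :
    q ∈ suppSub EX EZ EY ↔
      (∀ e ∉ EX, q.1 e = 0) ∧ (∀ e ∉ EZ, q.2.1 e = 0) ∧ (∀ e ∉ EY, q.2.2 e = 0) :=
  Iff.rfl

def stdv {ε : Type*} [DecidableEq ε] (EX EZ EY : Finset ε) :
    ({e // e ∈ EX} ⊕ {e // e ∈ EZ} ⊕ {e // e ∈ EY}) → Trip ε :=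
  Sum.elim (fun e => (chi {e.1}, 0, 0))
    (Sum.elim (fun e => (0, chi {e.1}, 0)) (fun e => (0, 0, chi {e.1})))

lemma stdv_mem_suppSub {ε : Type*} [DecidableEq ε] (EX EZ EY : Finset ε) (i) :
    stdv EX EZ EY i ∈ suppSub EX EZ EY := by
  rcases i with e | e | e <;>
    refine ⟨fun e' he' => ?_, fun e' he' => ?_, fun e' he' => ?_⟩ <;>
    simp only [stdv, Sum.elim_inl, Sum.elim_inr] <;>
    first
      | rfl
      | (apply chi_apply_not_mem
         intro hmem
         rw [Finset.mem_singleton] at hmem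
         subst hmem
         exact he' e.2)

lemma span_stdv_le_suppSub {ε : Type*} [DecidableEq ε] (EX EZ EY : Finset ε) :
    Submodule.span ℝ (Set.range (stdv EX EZ EY)) ≤ suppSub EX EZ EY := by
  rw [Submodule.span_le]
  rintro _ ⟨i, rfl⟩
  exact stdv_mem_suppSub EX EZ EY i

lemma suppSub_le_span_stdv {ε : Type*} [DecidableEq ε] (EX EZ EY : Finset ε) :
    suppSub EX EZ EY ≤ Submodule.span ℝ (Set.range (stdv EX EZ EY)) := by
  rintro q ⟨h1, h2, h3⟩
  have hdecomp : q = ∑ e ∈ EX.attach, q.1 e.1 • stdv EX EZ EY (Sum.inl e)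
      + ∑ e ∈ EZ.attach, q.2.1 e.1 • stdv EX EZ EY (Sum.inr (Sum.inl e))
      + ∑ e ∈ EY.attach, q.2.2 e.1 • stdv EX EZ EY (Sum.inr (Sum.inr e)) := by
    have comp : ∀ (E : Finset ε) (f : ε → ℝ), (∀ e ∉ E, f e = 0) →
        ∀ e0, f e0 = ∑ e ∈ E.attach, f e.1 * chi {e.1} e0 := by
      intro E f hf e0
      symm
      by_cases h : e0 ∈ E
      · rw [Finset.sum_eq_single (⟨e0, h⟩ : {x // x ∈ E})]
        · rw [chi_apply_mem (Finset.mem_singleton_self e0), mul_one]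
        · intro b _ hb
          rw [chi_apply_not_mem, mul_zero]
          simp only [Finset.mem_singleton]
          intro hs
          exact hb (Subtype.ext hs.symm)
        · intro hh
          exact absurd (Finset.mem_attach E ⟨e0, h⟩) hh
      · rw [hf e0 h]
        apply Finset.sum_eq_zero
        intro b _
        rw [chi_apply_not_mem, mul_zero]
        simp only [Finset.mem_singleton]
        intro hs
        subst hs
        exact h b.2
    have e1 : q.1 = (∑ e ∈ EX.attach, q.1 e.1 • stdv EX EZ EY (Sum.inl e)
        + ∑ e ∈ EZ.attach, q.2.1 e.1 • stdv EX EZ EY (Sum.inr (Sum.inl e))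
        + ∑ e ∈ EY.attach, q.2.2 e.1 • stdv EX EZ EY (Sum.inr (Sum.inr e))).1 := by
      funext e0
      simp only [Prod.fst_add, Prod.fst_sum, Pi.add_apply, Finset.sum_apply,
        Prod.smul_fst, Pi.smul_apply, smul_eq_mul, stdv, Sum.elim_inl, Sum.elim_inr]
      simp only [Pi.zero_apply, mul_zero, Finset.sum_const_zero, add_zero]
      exact comp EX q.1 h1 e0
    have e2 : q.2.1 = (∑ e ∈ EX.attach, q.1 e.1 • stdv EX EZ EY (Sum.inl e)
        + ∑ e ∈ EZ.attach, q.2.1 e.1 • stdv EX EZ EY (Sum.inr (Sum.inl e))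
        + ∑ e ∈ EY.attach, q.2.2 e.1 • stdv EX EZ EY (Sum.inr (Sum.inr e))).2.1 := by
      funext e0
      simp only [Prod.snd_add, Prod.fst_add, Prod.snd_sum, Prod.fst_sum, Pi.add_apply,
        Finset.sum_apply, Prod.smul_snd, Prod.smul_fst, Pi.smul_apply, smul_eq_mul, stdv,
        Sum.elim_inl, Sum.elim_inr]
      simp only [Pi.zero_apply, mul_zero, Finset.sum_const_zero, add_zero, zero_add]
      exact comp EZ q.2.1 h2 e0
    have e3 : q.2.2 = (∑ e ∈ EX.attach, q.1 e.1 • stdv EX EZ EY (Sum.inl e)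
        + ∑ e ∈ EZ.attach, q.2.1 e.1 • stdv EX EZ EY (Sum.inr (Sum.inl e))
        + ∑ e ∈ EY.attach, q.2.2 e.1 • stdv EX EZ EY (Sum.inr (Sum.inr e))).2.2 := by
      funext e0
      simp only [Prod.snd_add, Prod.snd_sum, Pi.add_apply, Finset.sum_apply,
        Prod.smul_snd, Pi.smul_apply, smul_eq_mul, stdv, Sum.elim_inl, Sum.elim_inr]
      simp only [Pi.zero_apply, mul_zero, Finset.sum_const_zero, add_zero, zero_add]
      exact comp EY q.2.2 h3 e0
    exact Prod.ext e1 (Prod.ext e2 e3)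
  rw [hdecomp]
  refine add_mem (add_mem ?_ ?_) ?_ <;>
    exact Submodule.sum_mem _ fun e _ =>
      Submodule.smul_mem _ _ (Submodule.subset_span ⟨_, rfl⟩)

lemma span_stdv_eq {ε : Type*} [DecidableEq ε] (EX EZ EY : Finset ε) :
    Submodule.span ℝ (Set.range (stdv EX EZ EY)) = suppSub EX EZ EY :=
  le_antisymm (span_stdv_le_suppSub EX EZ EY) (suppSub_le_span_stdv EX EZ EY)

lemma stdv_li {ε : Type*} [DecidableEq ε] (EX EZ EY : Finset ε) :
    LinearIndependent ℝ (stdv EX EZ EY) := by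
  rw [Fintype.linearIndependent_iff]
  intro g hg i
  have key : ∀ (E : Finset ε) (f : {e // e ∈ E} → ℝ) (e0 : {e // e ∈ E}),
      ∑ e : {e // e ∈ E}, f e * chi {e.1} e0.1 = f e0 := by
    intro E f e0
    rw [Finset.sum_eq_single e0]
    · rw [chi_apply_mem (Finset.mem_singleton_self e0.1), mul_one]
    · intro b _ hb
      rw [chi_apply_not_mem, mul_zero]
      simp only [Finset.mem_singleton]
      exact fun hs => hb (Subtype.ext hs.symm)
    · intro h; exact absurd (Finset.mem_univ e0) h
  rcases i with e | e | e
  · have h1 := congrFun (congrArg Prod.fst hg) e.1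
    simp only [Prod.smul_mk, smul_zero, Prod.fst_add, Prod.snd_add, Pi.add_apply, Prod.fst_sum, Finset.sum_apply, Prod.smul_fst, Pi.smul_apply, smul_eq_mul,
      Fintype.sum_sum_type, stdv, Sum.elim_inl, Sum.elim_inr, Pi.zero_apply, mul_zero,
      Finset.sum_const_zero, add_zero, Prod.fst_zero] at h1
    rw [key EX (fun e' => g (Sum.inl e')) e] at h1
    exact h1
  · have h1 := congrFun (congrArg (fun q : Trip ε => q.2.1) hg) e.1
    simp only [Prod.smul_mk, smul_zero, Prod.fst_add, Prod.snd_add, Pi.add_apply, Prod.snd_sum, Prod.fst_sum, Finset.sum_apply, Prod.smul_snd, Prod.smul_fst,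
      Pi.smul_apply, smul_eq_mul, Fintype.sum_sum_type, stdv, Sum.elim_inl, Sum.elim_inr,
      Pi.zero_apply, mul_zero, Finset.sum_const_zero, add_zero, zero_add, Prod.snd_zero,
      Prod.fst_zero] at h1
    rw [key EZ (fun e' => g (Sum.inr (Sum.inl e'))) e] at h1
    exact h1
  · have h1 := congrFun (congrArg (fun q : Trip ε => q.2.2) hg) e.1
    simp only [Prod.smul_mk, smul_zero, Prod.fst_add, Prod.snd_add, Pi.add_apply, Prod.snd_sum, Finset.sum_apply, Prod.smul_snd, Pi.smul_apply, smul_eq_mul,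
      Fintype.sum_sum_type, stdv, Sum.elim_inl, Sum.elim_inr, Pi.zero_apply, mul_zero,
      Finset.sum_const_zero, add_zero, zero_add, Prod.snd_zero] at h1
    rw [key EY (fun e' => g (Sum.inr (Sum.inr e'))) e] at h1
    exact h1

open Filter Topology in
lemma perturb_feasible {V W ε : Type*} [Fintype V] [Fintype W] [DecidableEq V] [DecidableEq W]
    [DecidableEq ε]
    (pX : ε → V × V) (pY : ε → W × W) (EX EY EZ : Finset ε) (L : ℕ)
    (x z y : ε → ℝ)
    (hmem : ((x, z, y) : Trip ε) ∈ LP_RRST pX pY EX EY EZ L)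
    (hx : ∀ e ∈ EX, 0 < x e) (hy : ∀ e ∈ EY, 0 < y e) (hz : ∀ e ∈ EZ, 0 < z e)
    (d : Trip ε)
    (hdX : ∀ e ∉ EX, d.1 e = 0) (hdZ : ∀ e ∉ EZ, d.2.1 e = 0) (hdY : ∀ e ∉ EY, d.2.2 e = 0)
    (htX : ∀ U : Finset V, (∑ e ∈ edgesIn pX EX U, x e = (U.card : ℝ) - 1) →
      ∑ e ∈ edgesIn pX EX U, d.1 e = 0)
    (htXall : ∑ e ∈ EX, d.1 e = 0)
    (htZ : ∑ e ∈ EZ, d.2.1 e = 0)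
    (htYall : ∑ e ∈ EY, d.2.2 e = 0)
    (htY : ∀ U : Finset W, (∑ e ∈ edgesIn pY EY U, y e = (U.card : ℝ) - 1) →
      ∑ e ∈ edgesIn pY EY U, d.2.2 e = 0)
    (htE1 : ∀ e ∈ EX ∩ EZ, z e = x e → d.2.1 e = d.1 e)
    (htE2 : ∀ e ∈ EY ∩ EZ, z e = y e → d.2.1 e = d.2.2 e) :
    ∀ᶠ t in 𝓝 (0 : ℝ), ((x, z, y) : Trip ε) + t • d ∈ LP_RRST pX pY EX EY EZ L := by
  classical
  obtain ⟨m1, m2, m3, m4, m5, m6, m7, m8, m9, m10, m11, m12, m13⟩ := hmem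
  replace m4 : ∀ e ∉ EX, x e = 0 := m4
  replace m5 : ∀ e ∉ EZ, z e = 0 := m5
  replace m6 : ∀ e ∉ EY, y e = 0 := m6
  replace m7 : ∑ e ∈ EX, x e = (Fintype.card V : ℝ) - 1 := m7
  replace m8 : ∀ U : Finset V, U.Nonempty → U ≠ Finset.univ →
      ∑ e ∈ edgesIn pX EX U, x e ≤ (U.card : ℝ) - 1 := m8
  replace m9 : ∀ e ∈ EX ∩ EZ, z e ≤ x e := m9
  replace m10 : ∑ e ∈ EZ, z e = (L : ℝ) := m10
  replace m11 : ∀ e ∈ EY ∩ EZ, z e ≤ y e := m11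
  replace m12 : ∑ e ∈ EY, y e = (Fintype.card W : ℝ) - 1 := m12
  replace m13 : ∀ U : Finset W, U.Nonempty → U ≠ Finset.univ →
      ∑ e ∈ edgesIn pY EY U, y e ≤ (U.card : ℝ) - 1 := m13
  have aff : ∀ (a b : ℝ), Tendsto (fun t : ℝ => a + t * b) (𝓝 0) (𝓝 a) := by
    intro a b
    have : Tendsto (fun t : ℝ => a + t * b) (𝓝 0) (𝓝 (a + 0 * b)) :=
      tendsto_const_nhds.add ((continuous_id.tendsto 0).mul tendsto_const_nhds)
    simpa using this
  -- C1 : nonnegativity of first block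
  have C1 : ∀ᶠ t in 𝓝 (0:ℝ), ∀ e : {e // e ∈ EX}, 0 < x e.1 + t * d.1 e.1 := by
    rw [Filter.eventually_all]
    intro e
    exact (aff (x e.1) (d.1 e.1)).eventually (eventually_gt_nhds (hx e.1 e.2))
  have C2 : ∀ᶠ t in 𝓝 (0:ℝ), ∀ e : {e // e ∈ EZ}, 0 < z e.1 + t * d.2.1 e.1 := by
    rw [Filter.eventually_all]
    intro e
    exact (aff (z e.1) (d.2.1 e.1)).eventually (eventually_gt_nhds (hz e.1 e.2))
  have C3 : ∀ᶠ t in 𝓝 (0:ℝ), ∀ e : {e // e ∈ EY}, 0 < y e.1 + t * d.2.2 e.1 := by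
    rw [Filter.eventually_all]
    intro e
    exact (aff (y e.1) (d.2.2 e.1)).eventually (eventually_gt_nhds (hy e.1 e.2))
  -- C8 : subtree constraints X
  have C8 : ∀ᶠ t in 𝓝 (0:ℝ), ∀ U : Finset V, U.Nonempty → U ≠ Finset.univ →
      ∑ e ∈ edgesIn pX EX U, x e + t * ∑ e ∈ edgesIn pX EX U, d.1 e ≤ (U.card : ℝ) - 1 := by
    rw [Filter.eventually_all]
    intro U
    by_cases hUn : U.Nonempty
    · by_cases hUu : U = Finset.univ
      · exact Filter.Eventually.of_forall fun t h1 h2 => absurd hUu h2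
      · by_cases ht : ∑ e ∈ edgesIn pX EX U, x e = (U.card : ℝ) - 1
        · refine Filter.Eventually.of_forall fun t _ _ => ?_
          rw [htX U ht, mul_zero, add_zero, ht]
        · have hlt : ∑ e ∈ edgesIn pX EX U, x e < (U.card : ℝ) - 1 :=
            lt_of_le_of_ne (m8 U hUn hUu) ht
          have := (aff (∑ e ∈ edgesIn pX EX U, x e) (∑ e ∈ edgesIn pX EX U, d.1 e)).eventually
            (eventually_lt_nhds hlt)
          exact this.mono fun t h h1 h2 => h.le
    · exact Filter.Eventually.of_forall fun t h1 h2 => absurd h1 hUn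
  have C13 : ∀ᶠ t in 𝓝 (0:ℝ), ∀ U : Finset W, U.Nonempty → U ≠ Finset.univ →
      ∑ e ∈ edgesIn pY EY U, y e + t * ∑ e ∈ edgesIn pY EY U, d.2.2 e ≤ (U.card : ℝ) - 1 := by
    rw [Filter.eventually_all]
    intro U
    by_cases hUn : U.Nonempty
    · by_cases hUu : U = Finset.univ
      · exact Filter.Eventually.of_forall fun t h1 h2 => absurd hUu h2
      · by_cases ht : ∑ e ∈ edgesIn pY EY U, y e = (U.card : ℝ) - 1
        · refine Filter.Eventually.of_forall fun t _ _ => ?_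
          rw [htY U ht, mul_zero, add_zero, ht]
        · have hlt : ∑ e ∈ edgesIn pY EY U, y e < (U.card : ℝ) - 1 :=
            lt_of_le_of_ne (m13 U hUn hUu) ht
          have := (aff (∑ e ∈ edgesIn pY EY U, y e) (∑ e ∈ edgesIn pY EY U, d.2.2 e)).eventually
            (eventually_lt_nhds hlt)
          exact this.mono fun t h h1 h2 => h.le
    · exact Filter.Eventually.of_forall fun t h1 h2 => absurd h1 hUn
  -- C9 : z ≤ x on EX ∩ EZ
  have C9 : ∀ᶠ t in 𝓝 (0:ℝ), ∀ e : {e // e ∈ EX ∩ EZ},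
      z e.1 + t * d.2.1 e.1 ≤ x e.1 + t * d.1 e.1 := by
    rw [Filter.eventually_all]
    intro e
    by_cases ht : z e.1 = x e.1
    · refine Filter.Eventually.of_forall fun t => ?_
      rw [htE1 e.1 e.2 ht, ht]
    · have hlt : z e.1 < x e.1 := lt_of_le_of_ne (m9 e.1 e.2) ht
      exact ((aff (z e.1) (d.2.1 e.1)).eventually_lt (aff (x e.1) (d.1 e.1)) hlt).mono
        fun t h => h.le
  have C11 : ∀ᶠ t in 𝓝 (0:ℝ), ∀ e : {e // e ∈ EY ∩ EZ},
      z e.1 + t * d.2.1 e.1 ≤ y e.1 + t * d.2.2 e.1 := by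
    rw [Filter.eventually_all]
    intro e
    by_cases ht : z e.1 = y e.1
    · refine Filter.Eventually.of_forall fun t => ?_
      rw [htE2 e.1 e.2 ht, ht]
    · have hlt : z e.1 < y e.1 := lt_of_le_of_ne (m11 e.1 e.2) ht
      exact ((aff (z e.1) (d.2.1 e.1)).eventually_lt (aff (y e.1) (d.2.2 e.1)) hlt).mono
        fun t h => h.le
  refine ((((((C1.and C2).and C3).and C8).and C13).and C9).and C11).mono ?_
  rintro t ⟨⟨⟨⟨⟨⟨c1, c2⟩, c3⟩, c8⟩, c13⟩, c9⟩, c11⟩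
  have happ1 : ∀ e, (((x, z, y) : Trip ε) + t • d).1 e = x e + t * d.1 e := fun e => rfl
  have happ2 : ∀ e, (((x, z, y) : Trip ε) + t • d).2.1 e = z e + t * d.2.1 e := fun e => rfl
  have happ3 : ∀ e, (((x, z, y) : Trip ε) + t • d).2.2 e = y e + t * d.2.2 e := fun e => rfl
  refine ⟨?_, ?_, ?_, ?_, ?_, ?_, ?_, ?_, ?_, ?_, ?_, ?_, ?_⟩
  · intro e
    rw [happ1]
    by_cases he : e ∈ EX
    · exact (c1 ⟨e, he⟩).le
    · rw [m4 e he, hdX e he, mul_zero, add_zero]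
  · intro e
    rw [happ2]
    by_cases he : e ∈ EZ
    · exact (c2 ⟨e, he⟩).le
    · rw [m5 e he, hdZ e he, mul_zero, add_zero]
  · intro e
    rw [happ3]
    by_cases he : e ∈ EY
    · exact (c3 ⟨e, he⟩).le
    · rw [m6 e he, hdY e he, mul_zero, add_zero]
  · intro e he
    rw [happ1, m4 e he, hdX e he, mul_zero, add_zero]
  · intro e he
    rw [happ2, m5 e he, hdZ e he, mul_zero, add_zero]
  · intro e he
    rw [happ3, m6 e he, hdY e he, mul_zero, add_zero]
  · calc ∑ e ∈ EX, (((x, z, y) : Trip ε) + t • d).1 e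
        = ∑ e ∈ EX, (x e + t * d.1 e) := Finset.sum_congr rfl fun e _ => happ1 e
      _ = ∑ e ∈ EX, x e + t * ∑ e ∈ EX, d.1 e := by
          rw [Finset.sum_add_distrib, Finset.mul_sum]
      _ = (Fintype.card V : ℝ) - 1 := by rw [m7, htXall, mul_zero, add_zero]
  · intro U hUn hUu
    calc ∑ e ∈ edgesIn pX EX U, (((x, z, y) : Trip ε) + t • d).1 e
        = ∑ e ∈ edgesIn pX EX U, x e + t * ∑ e ∈ edgesIn pX EX U, d.1 e := by
          rw [Finset.mul_sum, ← Finset.sum_add_distrib]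
          exact Finset.sum_congr rfl fun e _ => happ1 e
      _ ≤ (U.card : ℝ) - 1 := c8 U hUn hUu
  · intro e he
    rw [happ1, happ2]
    exact c9 ⟨e, he⟩
  · calc ∑ e ∈ EZ, (((x, z, y) : Trip ε) + t • d).2.1 e
        = ∑ e ∈ EZ, (z e + t * d.2.1 e) := Finset.sum_congr rfl fun e _ => happ2 e
      _ = ∑ e ∈ EZ, z e + t * ∑ e ∈ EZ, d.2.1 e := by
          rw [Finset.sum_add_distrib, Finset.mul_sum]
      _ = (L : ℝ) := by rw [m10, htZ, mul_zero, add_zero]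
  · intro e he
    rw [happ2, happ3]
    exact c11 ⟨e, he⟩
  · calc ∑ e ∈ EY, (((x, z, y) : Trip ε) + t • d).2.2 e
        = ∑ e ∈ EY, (y e + t * d.2.2 e) := Finset.sum_congr rfl fun e _ => happ3 e
      _ = ∑ e ∈ EY, y e + t * ∑ e ∈ EY, d.2.2 e := by
          rw [Finset.sum_add_distrib, Finset.mul_sum]
      _ = (Fintype.card W : ℝ) - 1 := by rw [m12, htYall, mul_zero, add_zero]
  · intro U hUn hUu
    calc ∑ e ∈ edgesIn pY EY U, (((x, z, y) : Trip ε) + t • d).2.2 e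
        = ∑ e ∈ edgesIn pY EY U, y e + t * ∑ e ∈ edgesIn pY EY U, d.2.2 e := by
          rw [Finset.mul_sum, ← Finset.sum_add_distrib]
          exact Finset.sum_congr rfl fun e _ => happ3 e
      _ ≤ (U.card : ℝ) - 1 := c13 U hUn hUu

open Filter Topology in
lemma extreme_orth_zero {V W ε : Type*} [Fintype V] [Fintype W] [DecidableEq V] [DecidableEq W]
    [DecidableEq ε]
    (pX : ε → V × V) (pY : ε → W × W) (EX EY EZ : Finset ε) (L : ℕ)
    (x z y : ε → ℝ)
    (hvert : ((x, z, y) : Trip ε) ∈ Set.extremePoints ℝ (LP_RRST pX pY EX EY EZ L))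
    (hx : ∀ e ∈ EX, 0 < x e) (hy : ∀ e ∈ EY, 0 < y e) (hz : ∀ e ∈ EZ, 0 < z e)
    (d : Trip ε)
    (hdX : ∀ e ∉ EX, d.1 e = 0) (hdZ : ∀ e ∉ EZ, d.2.1 e = 0) (hdY : ∀ e ∉ EY, d.2.2 e = 0)
    (htX : ∀ U : Finset V, (∑ e ∈ edgesIn pX EX U, x e = (U.card : ℝ) - 1) →
      ∑ e ∈ edgesIn pX EX U, d.1 e = 0)
    (htXall : ∑ e ∈ EX, d.1 e = 0)
    (htZ : ∑ e ∈ EZ, d.2.1 e = 0)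
    (htYall : ∑ e ∈ EY, d.2.2 e = 0)
    (htY : ∀ U : Finset W, (∑ e ∈ edgesIn pY EY U, y e = (U.card : ℝ) - 1) →
      ∑ e ∈ edgesIn pY EY U, d.2.2 e = 0)
    (htE1 : ∀ e ∈ EX ∩ EZ, z e = x e → d.2.1 e = d.1 e)
    (htE2 : ∀ e ∈ EY ∩ EZ, z e = y e → d.2.1 e = d.2.2 e) :
    d = 0 := by
  have hmem := hvert.1
  have hplus := perturb_feasible pX pY EX EY EZ L x z y hmem hx hy hz d
    hdX hdZ hdY htX htXall htZ htYall htY htE1 htE2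
  have hminus := perturb_feasible pX pY EX EY EZ L x z y hmem hx hy hz (-d)
    (fun e he => by simp [hdX e he]) (fun e he => by simp [hdZ e he])
    (fun e he => by simp [hdY e he])
    (fun U hU => by simp [htX U hU, Finset.sum_neg_distrib])
    (by simp [htXall]) (by simp [htZ]) (by simp [htYall])
    (fun U hU => by simp [htY U hU])
    (fun e he h => by simp [htE1 e he h]) (fun e he h => by simp [htE2 e he h])
  have hev := ((hplus.and hminus).filter_mono (nhdsWithin_le_nhds : 𝓝[>] (0:ℝ) ≤ 𝓝 0)).and
    eventually_mem_nhdsWithin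
  obtain ⟨t, ⟨hp, hm⟩, ht⟩ := hev.exists
  have ht0 : (0 : ℝ) < t := ht
  have hseg : ((x, z, y) : Trip ε) ∈
      openSegment ℝ (((x, z, y) : Trip ε) + t • d) (((x, z, y) : Trip ε) + t • (-d)) := by
    refine ⟨1/2, 1/2, by norm_num, by norm_num, by norm_num, ?_⟩
    module
  have := (hvert.2 hp hm hseg)
  have h0 : t • d = 0 := by
    have := congrArg (fun q => q - ((x, z, y) : Trip ε)) this
    simpa using this
  rcases smul_eq_zero.1 h0 with h | h
  · exact absurd h (ne_of_gt ht0)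
  · exact h

def vXv {V ε : Type*} [DecidableEq V] [DecidableEq ε] (pX : ε → V × V) (EX : Finset ε)
    (U : Finset V) : Trip ε := (chi (edgesIn pX EX U), 0, 0)

def vYv {W ε : Type*} [DecidableEq W] [DecidableEq ε] (pY : ε → W × W) (EY : Finset ε)
    (U : Finset W) : Trip ε := (0, 0, chi (edgesIn pY EY U))

def vE1v {ε : Type*} [DecidableEq ε] (e : ε) : Trip ε := (-(chi {e}), chi {e}, 0)

def vE2v {ε : Type*} [DecidableEq ε] (e : ε) : Trip ε := (0, chi {e}, -(chi {e}))

def vZvv {ε : Type*} [DecidableEq ε] (EZ : Finset ε) : Trip ε := (0, chi EZ, 0)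

section PhiComp

variable {V W ε : Type*} [DecidableEq V] [DecidableEq W] [DecidableEq ε]
  {EX EZ EY : Finset ε} (d : Trip ε)

lemma PhiB_vXv (pX : ε → V × V) (U : Finset V) :
    PhiB EX EZ EY d (vXv pX EX U) = ∑ e ∈ edgesIn pX EX U, d.1 e := by
  simp only [PhiB, LinearMap.mk₂_apply, vXv, Pi.zero_apply, mul_zero,
    Finset.sum_const_zero, add_zero]
  exact sum_mul_chi EX (edgesIn pX EX U) d.1 (edgesIn_subset pX EX U)

lemma PhiB_vYv (pY : ε → W × W) (U : Finset W) :
    PhiB EX EZ EY d (vYv pY EY U) = ∑ e ∈ edgesIn pY EY U, d.2.2 e := by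
  simp only [PhiB, LinearMap.mk₂_apply, vYv, Pi.zero_apply, mul_zero,
    Finset.sum_const_zero, add_zero, zero_add]
  exact sum_mul_chi EY (edgesIn pY EY U) d.2.2 (edgesIn_subset pY EY U)

lemma PhiB_vZvv : PhiB EX EZ EY d (vZvv EZ) = ∑ e ∈ EZ, d.2.1 e := by
  simp only [PhiB, LinearMap.mk₂_apply, vZvv, Pi.zero_apply, mul_zero,
    Finset.sum_const_zero, add_zero, zero_add]
  exact sum_mul_chi EZ EZ d.2.1 (Finset.Subset.refl _)

lemma PhiB_vE1v {e0 : ε} (h1 : e0 ∈ EX) (h2 : e0 ∈ EZ) :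
    PhiB EX EZ EY d (vE1v e0) = -(d.1 e0) + d.2.1 e0 := by
  simp only [PhiB, LinearMap.mk₂_apply, vE1v, Pi.zero_apply, mul_zero,
    Finset.sum_const_zero, add_zero, Pi.neg_apply, mul_neg]
  rw [Finset.sum_neg_distrib,
    sum_mul_chi EX {e0} d.1 (Finset.singleton_subset_iff.2 h1),
    sum_mul_chi EZ {e0} d.2.1 (Finset.singleton_subset_iff.2 h2),
    Finset.sum_singleton, Finset.sum_singleton]

lemma PhiB_vE2v {e0 : ε} (h1 : e0 ∈ EY) (h2 : e0 ∈ EZ) :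
    PhiB EX EZ EY d (vE2v e0) = d.2.1 e0 + -(d.2.2 e0) := by
  simp only [PhiB, LinearMap.mk₂_apply, vE2v, Pi.zero_apply, mul_zero,
    Finset.sum_const_zero, add_zero, zero_add, Pi.neg_apply, mul_neg]
  rw [Finset.sum_neg_distrib,
    sum_mul_chi EY {e0} d.2.2 (Finset.singleton_subset_iff.2 h1),
    sum_mul_chi EZ {e0} d.2.1 (Finset.singleton_subset_iff.2 h2),
    Finset.sum_singleton, Finset.sum_singleton]

end PhiComp

section Vneq

variable {V W ε : Type*} [DecidableEq V] [DecidableEq W] [DecidableEq ε]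

lemma chi_single_ne {e : ε} : chi ({e} : Finset ε) ≠ (0 : ε → ℝ) :=
  chi_ne_zero ⟨e, Finset.mem_singleton_self e⟩

lemma vXv_ne_vE1v (pX : ε → V × V) (EX : Finset ε) (U : Finset V) (e : ε) :
    vXv pX EX U ≠ vE1v e := fun h => chi_single_ne (congrArg (fun q : Trip ε => q.2.1) h).symm

lemma vXv_ne_vE2v (pX : ε → V × V) (EX : Finset ε) (U : Finset V) (e : ε) :
    vXv pX EX U ≠ vE2v e := fun h => chi_single_ne (congrArg (fun q : Trip ε => q.2.1) h).symm

lemma vXv_ne_vZvv (pX : ε → V × V) (EX : Finset ε) (U : Finset V) {EZ : Finset ε}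
    (hEZ : EZ.Nonempty) : vXv pX EX U ≠ vZvv EZ :=
  fun h => chi_ne_zero hEZ (congrArg (fun q : Trip ε => q.2.1) h).symm

lemma vYv_ne_vE1v (pY : ε → W × W) (EY : Finset ε) (U : Finset W) (e : ε) :
    vYv pY EY U ≠ vE1v e := fun h => chi_single_ne (congrArg (fun q : Trip ε => q.2.1) h).symm

lemma vYv_ne_vE2v (pY : ε → W × W) (EY : Finset ε) (U : Finset W) (e : ε) :
    vYv pY EY U ≠ vE2v e := fun h => chi_single_ne (congrArg (fun q : Trip ε => q.2.1) h).symm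

lemma vYv_ne_vZvv (pY : ε → W × W) (EY : Finset ε) (U : Finset W) {EZ : Finset ε}
    (hEZ : EZ.Nonempty) : vYv pY EY U ≠ vZvv EZ :=
  fun h => chi_ne_zero hEZ (congrArg (fun q : Trip ε => q.2.1) h).symm

lemma vE1v_ne_vE2v (e e' : ε) : vE1v e ≠ vE2v (ε := ε) e' := fun h => by
  have := (congrArg (fun q : Trip ε => q.1) h)
  simp only [vE1v, vE2v] at this
  exact chi_single_ne (neg_eq_zero.1 this)

lemma vE1v_ne_vZvv (e : ε) (EZ : Finset ε) : vE1v e ≠ vZvv EZ := fun h => by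
  have := (congrArg (fun q : Trip ε => q.1) h)
  simp only [vE1v, vZvv] at this
  exact chi_single_ne (neg_eq_zero.1 this)

lemma vE2v_ne_vZvv (e : ε) (EZ : Finset ε) : vE2v e ≠ vZvv EZ := fun h => by
  have := (congrArg (fun q : Trip ε => q.2.2) h)
  simp only [vE2v, vZvv] at this
  exact chi_single_ne (neg_eq_zero.1 this)

lemma vE1v_inj {e e' : ε} (h : vE1v (ε := ε) e = vE1v e') : e = e' :=
  chi_singleton_inj (congrArg (fun q : Trip ε => q.2.1) h)

lemma vE2v_inj {e e' : ε} (h : vE2v (ε := ε) e = vE2v e') : e = e' :=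
  chi_singleton_inj (congrArg (fun q : Trip ε => q.2.1) h)

lemma vXv_eq_vYv_zero (pX : ε → V × V) (EX : Finset ε) (pY : ε → W × W) (EY : Finset ε)
    (U : Finset V) (U' : Finset W) (h : vXv pX EX U = vYv pY EY U') :
    vXv pX EX U = 0 := by
  have h1 := congrArg (fun q : Trip ε => q.1) h
  simp only [vXv, vYv] at h1
  rw [show (0 : Trip ε) = ((0 : ε → ℝ), (0 : ε → ℝ), (0 : ε → ℝ)) from rfl]
  simp only [vXv, h1]

end Vneq

set_option maxHeartbeats 1600000 in
/-- A vertex solution `(x, z, y)` of `LP_RRST` with all coordinates on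
`E_X`, `E_Y`, `E_Z` strictly positive admits nonempty laminar families
`L(x) ⊆ F(x)`, `L(y) ⊆ F(y)` of tight vertex sets and subsets
`E(x,z) ⊆ E(x,z)*`, `E(z,y) ⊆ E(z,y)*` of tight edges such that
(i) `|E_X| + |E_Z| + |E_Y| = |L(x)| + |E(x,z)| + |E(z,y)| + |L(y)| + 1`, and
(ii) the corresponding vectors, together with `χ_Z(E_Z)`, are linearly independent. -/
theorem vertex_characterization_LP_RRST {V W ε : Type*}
    [Fintype V] [Fintype W] [DecidableEq V] [DecidableEq W] [DecidableEq ε]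
    [Nonempty V] [Nonempty W]
    (pX : ε → V × V) (pY : ε → W × W) (EX EY EZ : Finset ε) (L : ℕ)
    (hconnX : ConnectedOn pX EX) (hconnY : ConnectedOn pY EY)
    (hEXne : EX.Nonempty) (hEYne : EY.Nonempty) (hEZne : EZ.Nonempty)
    (hEZ : EZ ⊆ EX ∪ EY) (hL : L ≤ EZ.card)
    (x z y : ε → ℝ)
    (hvert : (x, z, y) ∈ Set.extremePoints ℝ (LP_RRST pX pY EX EY EZ L))
    (hx : ∀ e ∈ EX, 0 < x e) (hy : ∀ e ∈ EY, 0 < y e) (hz : ∀ e ∈ EZ, 0 < z e) :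
    ∃ (Lx : Finset (Finset V)) (Ly : Finset (Finset W)) (Exz Ezy : Finset ε),
      Lx.Nonempty ∧ Ly.Nonempty ∧ LaminarFamily Lx ∧ LaminarFamily Ly ∧
      (∀ U ∈ Lx, ∑ e ∈ edgesIn pX EX U, x e = (U.card : ℝ) - 1) ∧
      (∀ U ∈ Ly, ∑ e ∈ edgesIn pY EY U, y e = (U.card : ℝ) - 1) ∧
      Exz ⊆ EX ∩ EZ ∧ (∀ e ∈ Exz, z e = x e) ∧
      Ezy ⊆ EY ∩ EZ ∧ (∀ e ∈ Ezy, z e = y e) ∧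
      EX.card + EZ.card + EY.card = Lx.card + Exz.card + Ezy.card + Ly.card + 1 ∧
      LinearIndependent ℝ (Sum.elim
        (fun U : {U // U ∈ Lx} =>
          ((chi (edgesIn pX EX U.1), 0, 0) : (ε → ℝ) × (ε → ℝ) × (ε → ℝ)))
        (Sum.elim
          (fun U : {U // U ∈ Ly} =>
            ((0, 0, chi (edgesIn pY EY U.1)) : (ε → ℝ) × (ε → ℝ) × (ε → ℝ)))
          (Sum.elim
            (fun e : {e // e ∈ Exz} =>
              ((-(chi {e.1}), chi {e.1}, 0) : (ε → ℝ) × (ε → ℝ) × (ε → ℝ)))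
            (Sum.elim
              (fun e : {e // e ∈ Ezy} =>
                ((0, chi {e.1}, -(chi {e.1})) : (ε → ℝ) × (ε → ℝ) × (ε → ℝ)))
              (fun _ : Unit =>
                ((0, chi EZ, 0) : (ε → ℝ) × (ε → ℝ) × (ε → ℝ))))))) := by
  classical
  obtain ⟨m1, m2, m3, m4, m5, m6, m7, m8, m9, m10, m11, m12, m13⟩ := hvert.1
  replace m7 : ∑ e ∈ EX, x e = (Fintype.card V : ℝ) - 1 := m7
  replace m8 : ∀ U : Finset V, U.Nonempty → U ≠ Finset.univ →
      ∑ e ∈ edgesIn pX EX U, x e ≤ (U.card : ℝ) - 1 := m8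
  replace m12 : ∑ e ∈ EY, y e = (Fintype.card W : ℝ) - 1 := m12
  replace m13 : ∀ U : Finset W, U.Nonempty → U ≠ Finset.univ →
      ∑ e ∈ edgesIn pY EY U, y e ≤ (U.card : ℝ) - 1 := m13
  -- tight families
  set Fx : Finset (Finset V) := Finset.univ.filter
    (fun U => ∑ e ∈ edgesIn pX EX U, x e = (U.card : ℝ) - 1) with hFxdef
  set Fy : Finset (Finset W) := Finset.univ.filter
    (fun U => ∑ e ∈ edgesIn pY EY U, y e = (U.card : ℝ) - 1) with hFydef
  have hFxuniv : Finset.univ ∈ Fx := by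
    rw [hFxdef, Finset.mem_filter]
    refine ⟨Finset.mem_univ _, ?_⟩
    rw [edgesIn_univ, Finset.card_univ]
    exact m7
  have hFyuniv : Finset.univ ∈ Fy := by
    rw [hFydef, Finset.mem_filter]
    refine ⟨Finset.mem_univ _, ?_⟩
    rw [edgesIn_univ, Finset.card_univ]
    exact m12
  have hcclx : ∀ A ∈ Fx, ∀ B ∈ Fx, Crossing A B → A ∩ B ∈ Fx ∧ A ∪ B ∈ Fx ∧
      vXv pX EX (A ∩ B) + vXv pX EX (A ∪ B) = vXv pX EX A + vXv pX EX B := by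
    intro A hA B hB hcr
    rw [hFxdef, Finset.mem_filter] at hA hB
    obtain ⟨hi, hu, hchi⟩ := tight_uncross pX EX x hx m7 m8 hA.2 hB.2 hcr
    refine ⟨by rw [hFxdef, Finset.mem_filter]; exact ⟨Finset.mem_univ _, hi⟩,
      by rw [hFxdef, Finset.mem_filter]; exact ⟨Finset.mem_univ _, hu⟩, ?_⟩
    simp only [vXv, Prod.mk_add_mk, add_zero]
    exact congrArg (fun f => ((f, 0, 0) : Trip ε)) hchi
  have hccly : ∀ A ∈ Fy, ∀ B ∈ Fy, Crossing A B → A ∩ B ∈ Fy ∧ A ∪ B ∈ Fy ∧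
      vYv pY EY (A ∩ B) + vYv pY EY (A ∪ B) = vYv pY EY A + vYv pY EY B := by
    intro A hA B hB hcr
    rw [hFydef, Finset.mem_filter] at hA hB
    obtain ⟨hi, hu, hchi⟩ := tight_uncross pY EY y hy m12 m13 hA.2 hB.2 hcr
    refine ⟨by rw [hFydef, Finset.mem_filter]; exact ⟨Finset.mem_univ _, hi⟩,
      by rw [hFydef, Finset.mem_filter]; exact ⟨Finset.mem_univ _, hu⟩, ?_⟩
    simp only [vYv, Prod.mk_add_mk, add_zero, zero_add]
    exact congrArg (fun f => (((0 : ε → ℝ), (0 : ε → ℝ), f) : Trip ε)) hchi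
  obtain ⟨Kx, hKxF, hKxlam, hKxuniv, hKxspan⟩ := laminar_span_lemma Fx (vXv pX EX) hcclx hFxuniv
  obtain ⟨Ky, hKyF, hKylam, hKyuniv, hKyspan⟩ := laminar_span_lemma Fy (vYv pY EY) hccly hFyuniv
  set T1 : Finset ε := (EX ∩ EZ).filter (fun e => z e = x e) with hT1def
  set T2 : Finset ε := (EY ∩ EZ).filter (fun e => z e = y e) with hT2def
  set S : Set (Trip ε) := (vXv pX EX '' ↑Kx) ∪ ((vYv pY EY '' ↑Ky) ∪
    ((vE1v '' ↑T1) ∪ ((vE2v '' ↑T2) ∪ {vZvv EZ}))) with hSdef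
  have hSfin : S.Finite :=
    (Kx.finite_toSet.image _).union ((Ky.finite_toSet.image _).union
      ((T1.finite_toSet.image _).union ((T2.finite_toSet.image _).union
        (Set.finite_singleton _))))
  set Sp : Submodule ℝ (Trip ε) := Submodule.span ℝ S with hSpdef
  have hvXvS : ∀ U ∈ Kx, vXv pX EX U ∈ Sp := fun U hU =>
    Submodule.subset_span (Set.mem_union_left _ ⟨U, hU, rfl⟩)
  have hvYvS : ∀ U ∈ Ky, vYv pY EY U ∈ Sp := fun U hU =>
    Submodule.subset_span (Set.mem_union_right _ (Set.mem_union_left _ ⟨U, hU, rfl⟩))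
  have hvE1S : ∀ e ∈ T1, vE1v e ∈ Sp := fun e he =>
    Submodule.subset_span (Set.mem_union_right _ (Set.mem_union_right _
      (Set.mem_union_left _ ⟨e, he, rfl⟩)))
  have hvE2S : ∀ e ∈ T2, vE2v e ∈ Sp := fun e he =>
    Submodule.subset_span (Set.mem_union_right _ (Set.mem_union_right _
      (Set.mem_union_right _ (Set.mem_union_left _ ⟨e, he, rfl⟩))))
  have hvZS : vZvv EZ ∈ Sp :=
    Submodule.subset_span (Set.mem_union_right _ (Set.mem_union_right _
      (Set.mem_union_right _ (Set.mem_union_right _ rfl))))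
  have hvXvSpTight : ∀ U ∈ Fx, vXv pX EX U ∈ Sp := by
    intro U hU
    have h1 := hKxspan U hU
    have h2 : Submodule.span ℝ (vXv pX EX '' ↑Kx) ≤ Sp :=
      Submodule.span_le.2 fun s hs => Submodule.subset_span (Set.mem_union_left _ hs)
    exact h2 h1
  have hvYvSpTight : ∀ U ∈ Fy, vYv pY EY U ∈ Sp := by
    intro U hU
    have h1 := hKyspan U hU
    have h2 : Submodule.span ℝ (vYv pY EY '' ↑Ky) ≤ Sp :=
      Submodule.span_le.2 fun s hs => Submodule.subset_span
        (Set.mem_union_right _ (Set.mem_union_left _ hs))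
    exact h2 h1
  -- support conditions
  have hSsupp : S ⊆ ↑(suppSub EX EZ EY) := by
    rintro s (⟨U, hU, rfl⟩ | ⟨U, hU, rfl⟩ | ⟨e, he, rfl⟩ | ⟨e, he, rfl⟩ | rfl)
    · exact ⟨fun e' he' => chi_apply_not_mem (fun hm => he' (edgesIn_subset _ _ _ hm)),
        fun e' _ => rfl, fun e' _ => rfl⟩
    · exact ⟨fun e' _ => rfl, fun e' _ => rfl,
        fun e' he' => chi_apply_not_mem (fun hm => he' (edgesIn_subset _ _ _ hm))⟩
    · have heXZ : e ∈ EX ∩ EZ := Finset.mem_of_mem_filter _ he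
      refine ⟨fun e' he' => ?_, fun e' he' => ?_, fun e' _ => rfl⟩
      · show -(chi {e} e') = 0
        rw [chi_apply_not_mem (by
          simp only [Finset.mem_singleton]
          rintro rfl
          exact he' (Finset.mem_inter.1 heXZ).1), neg_zero]
      · show chi {e} e' = 0
        exact chi_apply_not_mem (by
          simp only [Finset.mem_singleton]
          rintro rfl
          exact he' (Finset.mem_inter.1 heXZ).2)
    · have heYZ : e ∈ EY ∩ EZ := Finset.mem_of_mem_filter _ he
      refine ⟨fun e' _ => rfl, fun e' he' => ?_, fun e' he' => ?_⟩
      · show chi {e} e' = 0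
        exact chi_apply_not_mem (by
          simp only [Finset.mem_singleton]
          rintro rfl
          exact he' (Finset.mem_inter.1 heYZ).2)
      · show -(chi {e} e') = 0
        rw [chi_apply_not_mem (by
          simp only [Finset.mem_singleton]
          rintro rfl
          exact he' (Finset.mem_inter.1 heYZ).1), neg_zero]
    · exact ⟨fun e' _ => rfl, fun e' he' => chi_apply_not_mem he', fun e' _ => rfl⟩
  have hSpLe : Sp ≤ suppSub EX EZ EY := Submodule.span_le.2 hSsupp
  haveI hFD1 : FiniteDimensional ℝ ↥(suppSub EX EZ EY) := by
    rw [← span_stdv_eq EX EZ EY]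
    exact FiniteDimensional.span_of_finite ℝ (Set.finite_range _)
  haveI hFD2 : FiniteDimensional ℝ ↥Sp := FiniteDimensional.span_of_finite ℝ hSfin
  -- the key claim: Sp = suppSub
  have hle2 : suppSub EX EZ EY ≤ Sp := by
    by_contra hns
    have hlt : Sp < suppSub EX EZ EY :=
      lt_of_le_of_ne hSpLe (fun h => hns (le_of_eq h.symm))
    set φ : ↥(suppSub EX EZ EY) →ₗ[ℝ] (↥Sp →ₗ[ℝ] ℝ) :=
      ((PhiB EX EZ EY).compl₂ Sp.subtype).comp (suppSub EX EZ EY).subtype with hphidef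
    have hrank := LinearMap.finrank_range_add_finrank_ker φ
    have hr1 : Module.finrank ℝ ↥(LinearMap.range φ) ≤ Module.finrank ℝ ↥Sp := by
      have h := Submodule.finrank_le (LinearMap.range φ)
      rwa [Subspace.dual_finrank_eq] at h
    have hr2 : Module.finrank ℝ ↥Sp < Module.finrank ℝ ↥(suppSub EX EZ EY) :=
      Submodule.finrank_lt_finrank_of_lt hlt
    have hker : 0 < Module.finrank ℝ ↥(LinearMap.ker φ) := by omega
    haveI : Nontrivial ↥(LinearMap.ker φ) := Module.finrank_pos_iff.1 hker
    obtain ⟨dd, hdd⟩ := exists_ne (0 : ↥(LinearMap.ker φ))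
    set d : Trip ε := ((dd : ↥(suppSub EX EZ EY)) : Trip ε) with hddef
    have hdsupp := (dd : ↥(suppSub EX EZ EY)).2
    rw [mem_suppSub] at hdsupp
    have horth : ∀ s ∈ Sp, PhiB EX EZ EY d s = 0 := by
      intro s hs
      have h0 : φ (dd : ↥(suppSub EX EZ EY)) = 0 := dd.2
      exact LinearMap.congr_fun h0 ⟨s, hs⟩
    have hd0 : d = 0 := by
      refine extreme_orth_zero pX pY EX EY EZ L x z y hvert hx hy hz d
        hdsupp.1 hdsupp.2.1 hdsupp.2.2 ?_ ?_ ?_ ?_ ?_ ?_ ?_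
      · intro U hU
        have hUF : U ∈ Fx := by
          rw [hFxdef, Finset.mem_filter]; exact ⟨Finset.mem_univ _, hU⟩
        have h1 := horth _ (hvXvSpTight U hUF)
        rwa [PhiB_vXv] at h1
      · have h1 := horth _ (hvXvSpTight _ hFxuniv)
        rwa [PhiB_vXv, edgesIn_univ] at h1
      · have h1 := horth _ hvZS
        rwa [PhiB_vZvv] at h1
      · have h1 := horth _ (hvYvSpTight _ hFyuniv)
        rwa [PhiB_vYv, edgesIn_univ] at h1
      · intro U hU
        have hUF : U ∈ Fy := by
          rw [hFydef, Finset.mem_filter]; exact ⟨Finset.mem_univ _, hU⟩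
        have h1 := horth _ (hvYvSpTight U hUF)
        rwa [PhiB_vYv] at h1
      · intro e he hze
        have heT : e ∈ T1 := by rw [hT1def, Finset.mem_filter]; exact ⟨he, hze⟩
        have h1 := horth _ (hvE1S e heT)
        rw [PhiB_vE1v d (Finset.mem_inter.1 he).1 (Finset.mem_inter.1 he).2] at h1
        linear_combination h1
      · intro e he hze
        have heT : e ∈ T2 := by rw [hT2def, Finset.mem_filter]; exact ⟨he, hze⟩
        have h1 := horth _ (hvE2S e heT)
        rw [PhiB_vE2v d (Finset.mem_inter.1 he).1 (Finset.mem_inter.1 he).2] at h1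
        linear_combination h1
    exact hdd (Subtype.ext (Subtype.ext hd0))
  have hSpEq : Sp = suppSub EX EZ EY := le_antisymm hSpLe hle2
  -- seed independent set
  set a0 : Trip ε := vXv pX EX Finset.univ with ha0def
  set c0 : Trip ε := vYv pY EY Finset.univ with hc0def
  have hc0ne : c0 ≠ 0 := by
    intro h
    have h1 := congrArg (fun q : Trip ε => q.2.2) h
    rw [hc0def] at h1
    simp only [vYv] at h1
    rw [edgesIn_univ] at h1
    exact chi_ne_zero hEYne h1
  have li1 : LinearIndependent ℝ ((↑) : ({c0} : Set (Trip ε)) → Trip ε) :=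
    LinearIndepOn.singleton (v := id) hc0ne
  have hz_notin : vZvv EZ ∉ Submodule.span ℝ ({c0} : Set (Trip ε)) := by
    rw [Submodule.mem_span_singleton]
    rintro ⟨r, hr⟩
    have h1 := congrArg (fun q : Trip ε => q.2.1) hr
    rw [hc0def] at h1
    simp only [vYv, vZvv, Prod.smul_mk, smul_zero] at h1
    exact chi_ne_zero hEZne h1.symm
  have li2 : LinearIndependent ℝ ((↑) : (insert (vZvv EZ) {c0} : Set (Trip ε)) → Trip ε) :=
    LinearIndepOn.id_insert li1 hz_notin
  have ha_notin : a0 ∉ Submodule.span ℝ (insert (vZvv EZ) {c0} : Set (Trip ε)) := by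
    rw [Submodule.mem_span_insert]
    rintro ⟨r, w, hw, hr⟩
    rw [Submodule.mem_span_singleton] at hw
    obtain ⟨r', rfl⟩ := hw
    have h1 := congrArg (fun q : Trip ε => q.1) hr
    rw [ha0def, hc0def] at h1
    simp only [vXv, vYv, vZvv, Prod.smul_mk, smul_zero, Prod.mk_add_mk, add_zero] at h1
    rw [edgesIn_univ] at h1
    exact chi_ne_zero hEXne (by simpa using h1)
  have li0 : LinearIndependent ℝ
      ((↑) : (insert a0 (insert (vZvv EZ) {c0}) : Set (Trip ε)) → Trip ε) :=
    LinearIndepOn.id_insert li2 ha_notin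
  have hs0S : (insert a0 (insert (vZvv EZ) {c0}) : Set (Trip ε)) ⊆ S := by
    rintro s (rfl | rfl | rfl)
    · exact Set.mem_union_left _ ⟨Finset.univ, hKxuniv, rfl⟩
    · exact Set.mem_union_right _ (Set.mem_union_right _ (Set.mem_union_right _
        (Set.mem_union_right _ rfl)))
    · exact Set.mem_union_right _ (Set.mem_union_left _ ⟨Finset.univ, hKyuniv, rfl⟩)
  set B : Set (Trip ε) := LinearIndepOn.extend (v := id) li0 hs0S with hBdef
  have hBsub : B ⊆ S := LinearIndepOn.extend_subset (v := id) li0 hs0S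
  have hs0B : (insert a0 (insert (vZvv EZ) {c0}) : Set (Trip ε)) ⊆ B :=
    LinearIndepOn.subset_extend (v := id) li0 hs0S
  have hBli : LinearIndependent ℝ ((↑) : B → Trip ε) := LinearIndepOn.linearIndepOn_extend (v := id) li0 hs0S
  have hBspan : Submodule.span ℝ B = Sp := by
    rw [hBdef, LinearIndepOn.span_extend_eq_span li0 hs0S]
  have hBfin : B.Finite := hSfin.subset hBsub
  set Bf : Finset (Trip ε) := hBfin.toFinset with hBfdef
  have hmemBf : ∀ {b : Trip ε}, b ∈ Bf ↔ b ∈ B := fun {b} => hBfin.mem_toFinset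
  -- cardinality of the basis
  have hNrank : Bf.card = EX.card + EZ.card + EY.card := by
    letI : Fintype ↥B := hBfin.fintype
    have h1 : Module.finrank ℝ ↥(Submodule.span ℝ B) = B.toFinset.card :=
      finrank_span_set_eq_card hBli
    have h2 : Module.finrank ℝ ↥(Submodule.span ℝ (Set.range (stdv EX EZ EY)))
        = Fintype.card ({e // e ∈ EX} ⊕ {e // e ∈ EZ} ⊕ {e // e ∈ EY}) :=
      finrank_span_eq_card (stdv_li EX EZ EY)
    have h3 : Bf = B.toFinset := hBfin.toFinset_eq_toFinset
    rw [h3, ← h1, hBspan, hSpEq, ← span_stdv_eq EX EZ EY, h2]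
    simp [Fintype.card_sum, Fintype.card_coe]
    omega
  have h0B : (0 : Trip ε) ∉ B := fun h => hBli.ne_zero ⟨0, h⟩ rfl
  have trip_eq_zero : ∀ {b : Trip ε}, b.1 = 0 → b.2.1 = 0 → b.2.2 = 0 → b = 0 := by
    rintro ⟨b1, b2, b3⟩ h1 h2 h3
    simp only at h1 h2 h3
    rw [h1, h2, h3]
    rfl
  have hScases : ∀ b ∈ Bf, (∃ U ∈ Kx, vXv pX EX U = b) ∨ (∃ U ∈ Ky, vYv pY EY U = b)
      ∨ (∃ e ∈ T1, vE1v e = b) ∨ (∃ e ∈ T2, vE2v e = b) ∨ b = vZvv EZ := by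
    intro b hb
    have hbS : b ∈ S := hBsub (hmemBf.1 hb)
    rcases hbS with ⟨U, hU, rfl⟩ | ⟨U, hU, rfl⟩ | ⟨e, he, rfl⟩ | ⟨e, he, rfl⟩ | h
    · exact Or.inl ⟨U, hU, rfl⟩
    · exact Or.inr (Or.inl ⟨U, hU, rfl⟩)
    · exact Or.inr (Or.inr (Or.inl ⟨e, he, rfl⟩))
    · exact Or.inr (Or.inr (Or.inr (Or.inl ⟨e, he, rfl⟩)))
    · exact Or.inr (Or.inr (Or.inr (Or.inr h)))
  set Bx : Finset (Trip ε) := Bf.filter (fun b => b.2.1 = 0 ∧ b.2.2 = 0) with hBxdef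
  set By : Finset (Trip ε) := Bf.filter (fun b => b.1 = 0 ∧ b.2.1 = 0 ∧ b.2.2 ≠ 0) with hBydef
  set B1 : Finset (Trip ε) := Bf.filter (fun b => b.1 ≠ 0 ∧ b.2.1 ≠ 0) with hB1def
  set B2 : Finset (Trip ε) := Bf.filter (fun b => b.1 = 0 ∧ b.2.1 ≠ 0 ∧ b.2.2 ≠ 0) with hB2def
  set Bz : Finset (Trip ε) := Bf.filter (fun b => b.1 = 0 ∧ b.2.1 ≠ 0 ∧ b.2.2 = 0) with hBzdef
  -- shape facts
  have hvE1shape : ∀ e : ε, (vE1v (ε := ε) e).1 ≠ 0 ∧ (vE1v (ε := ε) e).2.1 ≠ 0 ∧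
      (vE1v (ε := ε) e).2.2 = 0 := by
    intro e
    refine ⟨?_, ?_, rfl⟩
    · show -(chi {e}) ≠ 0
      simp only [neg_ne_zero]
      exact chi_single_ne
    · exact chi_single_ne
  have hvE2shape : ∀ e : ε, (vE2v (ε := ε) e).1 = 0 ∧ (vE2v (ε := ε) e).2.1 ≠ 0 ∧
      (vE2v (ε := ε) e).2.2 ≠ 0 := by
    intro e
    refine ⟨rfl, chi_single_ne, ?_⟩
    show -(chi {e}) ≠ 0
    simp only [neg_ne_zero]
    exact chi_single_ne
  have hvZshape : (vZvv EZ).1 = 0 ∧ (vZvv EZ).2.1 ≠ 0 ∧ (vZvv EZ).2.2 = 0 :=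
    ⟨rfl, chi_ne_zero hEZne, rfl⟩
  -- coverage
  have hcover : ∀ b ∈ Bf, b ∈ Bx ∨ b ∈ By ∨ b ∈ B1 ∨ b ∈ B2 ∨ b ∈ Bz := by
    intro b hb
    have hbne : b ≠ 0 := fun h => h0B (h ▸ hmemBf.1 hb)
    rcases hScases b hb with ⟨U, hU, rfl⟩ | ⟨U, hU, rfl⟩ | ⟨e, he, rfl⟩ | ⟨e, he, rfl⟩ | rfl
    · exact Or.inl (Finset.mem_filter.2 ⟨hb, rfl, rfl⟩)
    · refine Or.inr (Or.inl (Finset.mem_filter.2 ⟨hb, rfl, rfl, ?_⟩))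
      intro h3
      exact hbne (trip_eq_zero rfl rfl h3)
    · exact Or.inr (Or.inr (Or.inl (Finset.mem_filter.2
        ⟨hb, (hvE1shape e).1, (hvE1shape e).2.1⟩)))
    · exact Or.inr (Or.inr (Or.inr (Or.inl (Finset.mem_filter.2
        ⟨hb, (hvE2shape e).1, (hvE2shape e).2.1, (hvE2shape e).2.2⟩))))
    · exact Or.inr (Or.inr (Or.inr (Or.inr (Finset.mem_filter.2
        ⟨hb, hvZshape.1, hvZshape.2.1, hvZshape.2.2⟩))))
  -- preimages
  have hBxpre : ∀ b ∈ Bx, ∃ U, U ∈ Kx ∧ vXv pX EX U = b := by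
    intro b hb
    rw [hBxdef, Finset.mem_filter] at hb
    obtain ⟨hbf, hp1, hp2⟩ := hb
    rcases hScases b hbf with ⟨U, hU, rfl⟩ | ⟨U, hU, rfl⟩ | ⟨e, he, rfl⟩ | ⟨e, he, rfl⟩ | rfl
    · exact ⟨U, hU, rfl⟩
    · exact absurd (trip_eq_zero rfl rfl hp2) (fun h => h0B (h ▸ hmemBf.1 hbf))
    · exact absurd hp1 (hvE1shape e).2.1
    · exact absurd hp1 (hvE2shape e).2.1
    · exact absurd hp1 hvZshape.2.1
  have hBypre : ∀ b ∈ By, ∃ U, U ∈ Ky ∧ vYv pY EY U = b := by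
    intro b hb
    rw [hBydef, Finset.mem_filter] at hb
    obtain ⟨hbf, hp1, hp2, hp3⟩ := hb
    rcases hScases b hbf with ⟨U, hU, rfl⟩ | ⟨U, hU, rfl⟩ | ⟨e, he, rfl⟩ | ⟨e, he, rfl⟩ | rfl
    · exact absurd rfl hp3
    · exact ⟨U, hU, rfl⟩
    · exact absurd hp2 (hvE1shape e).2.1
    · exact absurd hp2 (hvE2shape e).2.1
    · exact absurd hp2 hvZshape.2.1
  have hB1pre : ∀ b ∈ B1, ∃ e, e ∈ T1 ∧ vE1v e = b := by
    intro b hb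
    rw [hB1def, Finset.mem_filter] at hb
    obtain ⟨hbf, hp1, hp2⟩ := hb
    rcases hScases b hbf with ⟨U, hU, rfl⟩ | ⟨U, hU, rfl⟩ | ⟨e, he, rfl⟩ | ⟨e, he, rfl⟩ | rfl
    · exact absurd rfl hp2
    · exact absurd rfl hp1
    · exact ⟨e, he, rfl⟩
    · exact absurd (hvE2shape e).1 hp1
    · exact absurd hvZshape.1 hp1
  have hB2pre : ∀ b ∈ B2, ∃ e, e ∈ T2 ∧ vE2v e = b := by
    intro b hb
    rw [hB2def, Finset.mem_filter] at hb
    obtain ⟨hbf, hp1, hp2, hp3⟩ := hb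
    rcases hScases b hbf with ⟨U, hU, rfl⟩ | ⟨U, hU, rfl⟩ | ⟨e, he, rfl⟩ | ⟨e, he, rfl⟩ | rfl
    · exact absurd rfl hp2
    · exact absurd rfl hp2
    · exact absurd (hvE1shape e).1 (by rw [hp1]; exact fun h => h rfl)
    · exact ⟨e, he, rfl⟩
    · exact absurd hvZshape.2.2 hp3
  have hBz_eq : Bz = {vZvv EZ} := by
    apply Finset.Subset.antisymm
    · intro b hb
      rw [hBzdef, Finset.mem_filter] at hb
      obtain ⟨hbf, hp1, hp2, hp3⟩ := hb
      rcases hScases b hbf with ⟨U, hU, rfl⟩ | ⟨U, hU, rfl⟩ | ⟨e, he, rfl⟩ | ⟨e, he, rfl⟩ | rfl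
      · exact absurd rfl hp2
      · exact absurd rfl hp2
      · exact absurd (hvE1shape e).1 (by rw [hp1]; exact fun h => h rfl)
      · exact absurd hp3 (hvE2shape e).2.2
      · exact Finset.mem_singleton_self _
    · rw [Finset.singleton_subset_iff, hBzdef, Finset.mem_filter]
      exact ⟨hmemBf.2 (hs0B (Set.mem_insert_of_mem _ (Set.mem_insert _ _))),
        hvZshape.1, hvZshape.2.1, hvZshape.2.2⟩
  -- partition
  have hBfeq : Bf = Bx ∪ (By ∪ (B1 ∪ (B2 ∪ Bz))) := by
    apply Finset.Subset.antisymm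
    · intro b hb
      rcases hcover b hb with h | h | h | h | h
      · exact Finset.mem_union.2 (Or.inl h)
      · exact Finset.mem_union.2 (Or.inr (Finset.mem_union.2 (Or.inl h)))
      · exact Finset.mem_union.2 (Or.inr (Finset.mem_union.2 (Or.inr
          (Finset.mem_union.2 (Or.inl h)))))
      · exact Finset.mem_union.2 (Or.inr (Finset.mem_union.2 (Or.inr
          (Finset.mem_union.2 (Or.inr (Finset.mem_union.2 (Or.inl h)))))))
      · exact Finset.mem_union.2 (Or.inr (Finset.mem_union.2 (Or.inr
          (Finset.mem_union.2 (Or.inr (Finset.mem_union.2 (Or.inr h)))))))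
    · intro b hb
      rcases Finset.mem_union.1 hb with h | h
      · exact Finset.mem_of_mem_filter _ h
      rcases Finset.mem_union.1 h with h | h
      · exact Finset.mem_of_mem_filter _ h
      rcases Finset.mem_union.1 h with h | h
      · exact Finset.mem_of_mem_filter _ h
      rcases Finset.mem_union.1 h with h | h
      · exact Finset.mem_of_mem_filter _ h
      · exact Finset.mem_of_mem_filter _ h
  have hd1 : Disjoint Bx (By ∪ (B1 ∪ (B2 ∪ Bz))) := by
    rw [Finset.disjoint_left]
    intro b hb hb'
    rw [hBxdef, Finset.mem_filter] at hb
    obtain ⟨-, h21, h22⟩ := hb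
    simp only [Finset.mem_union, hBydef, hB1def, hB2def, hBzdef, Finset.mem_filter] at hb'
    rcases hb' with ⟨-, -, -, h⟩ | ⟨-, -, h⟩ | ⟨-, -, h, -⟩ | ⟨-, -, h, -⟩
    · exact h h22
    · exact h h21
    · exact h h21
    · exact h h21
  have hd2 : Disjoint By (B1 ∪ (B2 ∪ Bz)) := by
    rw [Finset.disjoint_left]
    intro b hb hb'
    rw [hBydef, Finset.mem_filter] at hb
    obtain ⟨-, h1, h21, h22⟩ := hb
    simp only [Finset.mem_union, hB1def, hB2def, hBzdef, Finset.mem_filter] at hb'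
    rcases hb' with ⟨-, h, -⟩ | ⟨-, -, h, -⟩ | ⟨-, -, h, -⟩
    · exact h h1
    · exact h h21
    · exact h h21
  have hd3 : Disjoint B1 (B2 ∪ Bz) := by
    rw [Finset.disjoint_left]
    intro b hb hb'
    rw [hB1def, Finset.mem_filter] at hb
    obtain ⟨-, h1, h21⟩ := hb
    simp only [Finset.mem_union, hB2def, hBzdef, Finset.mem_filter] at hb'
    rcases hb' with ⟨-, h, -⟩ | ⟨-, h, -⟩
    · exact h1 h
    · exact h1 h
  have hd4 : Disjoint B2 Bz := by
    rw [Finset.disjoint_left]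
    intro b hb hb'
    rw [hB2def, Finset.mem_filter] at hb
    rw [hBzdef, Finset.mem_filter] at hb'
    exact hb.2.2.2 hb'.2.2.2
  have hcardsum : Bf.card = Bx.card + (By.card + (B1.card + (B2.card + Bz.card))) := by
    rw [hBfeq, Finset.card_union_of_disjoint hd1, Finset.card_union_of_disjoint hd2,
      Finset.card_union_of_disjoint hd3, Finset.card_union_of_disjoint hd4]
  -- seeds
  have ha0Bx : a0 ∈ Bx := by
    rw [hBxdef, Finset.mem_filter]
    exact ⟨hmemBf.2 (hs0B (Set.mem_insert _ _)), rfl, rfl⟩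
  have hc0By : c0 ∈ By := by
    rw [hBydef, Finset.mem_filter]
    refine ⟨hmemBf.2 (hs0B (Set.mem_insert_of_mem _ (Set.mem_insert_of_mem _ rfl))), rfl, rfl, ?_⟩
    show (c0).2.2 ≠ 0
    rw [hc0def]
    show chi (edgesIn pY EY Finset.univ) ≠ 0
    rw [edgesIn_univ]
    exact chi_ne_zero hEYne
  -- extraction of index families
  set LxF : Finset (Finset V) :=
    Bx.attach.image (fun b => Classical.choose (hBxpre b.1 b.2)) with hLxFdef
  have hLxspec : ∀ b : {b // b ∈ Bx}, Classical.choose (hBxpre b.1 b.2) ∈ Kx ∧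
      vXv pX EX (Classical.choose (hBxpre b.1 b.2)) = b.1 :=
    fun b => Classical.choose_spec (hBxpre b.1 b.2)
  have hLxmem : ∀ U ∈ LxF, U ∈ Kx ∧ vXv pX EX U ∈ Bx := by
    intro U hU
    rw [hLxFdef, Finset.mem_image] at hU
    obtain ⟨b, _, rfl⟩ := hU
    exact ⟨(hLxspec b).1, by rw [(hLxspec b).2]; exact b.2⟩
  have hLxcard : LxF.card = Bx.card := by
    rw [hLxFdef, Finset.card_image_of_injOn, Finset.card_attach]
    intro b _ b' _ h
    have h' : Classical.choose (hBxpre b.1 b.2) = Classical.choose (hBxpre b'.1 b'.2) := h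
    apply Subtype.ext
    rw [← (hLxspec b).2, ← (hLxspec b').2, h']
  have hLxinj : ∀ U ∈ LxF, ∀ U' ∈ LxF, vXv pX EX U = vXv pX EX U' → U = U' := by
    intro U hU U' hU' h
    rw [hLxFdef, Finset.mem_image] at hU hU'
    obtain ⟨b, _, rfl⟩ := hU
    obtain ⟨b', _, rfl⟩ := hU'
    have hbb : b = b' := by
      apply Subtype.ext
      rw [← (hLxspec b).2, ← (hLxspec b').2]
      exact h
    cases hbb
    rfl
  set LyF : Finset (Finset W) :=
    By.attach.image (fun b => Classical.choose (hBypre b.1 b.2)) with hLyFdef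
  have hLyspec : ∀ b : {b // b ∈ By}, Classical.choose (hBypre b.1 b.2) ∈ Ky ∧
      vYv pY EY (Classical.choose (hBypre b.1 b.2)) = b.1 :=
    fun b => Classical.choose_spec (hBypre b.1 b.2)
  have hLymem : ∀ U ∈ LyF, U ∈ Ky ∧ vYv pY EY U ∈ By := by
    intro U hU
    rw [hLyFdef, Finset.mem_image] at hU
    obtain ⟨b, _, rfl⟩ := hU
    exact ⟨(hLyspec b).1, by rw [(hLyspec b).2]; exact b.2⟩
  have hLycard : LyF.card = By.card := by
    rw [hLyFdef, Finset.card_image_of_injOn, Finset.card_attach]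
    intro b _ b' _ h
    have h' : Classical.choose (hBypre b.1 b.2) = Classical.choose (hBypre b'.1 b'.2) := h
    apply Subtype.ext
    rw [← (hLyspec b).2, ← (hLyspec b').2, h']
  have hLyinj : ∀ U ∈ LyF, ∀ U' ∈ LyF, vYv pY EY U = vYv pY EY U' → U = U' := by
    intro U hU U' hU' h
    rw [hLyFdef, Finset.mem_image] at hU hU'
    obtain ⟨b, _, rfl⟩ := hU
    obtain ⟨b', _, rfl⟩ := hU'
    have hbb : b = b' := by
      apply Subtype.ext
      rw [← (hLyspec b).2, ← (hLyspec b').2]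
      exact h
    cases hbb
    rfl
  set ExzF : Finset ε :=
    B1.attach.image (fun b => Classical.choose (hB1pre b.1 b.2)) with hExzFdef
  have hExzspec : ∀ b : {b // b ∈ B1}, Classical.choose (hB1pre b.1 b.2) ∈ T1 ∧
      vE1v (Classical.choose (hB1pre b.1 b.2)) = b.1 :=
    fun b => Classical.choose_spec (hB1pre b.1 b.2)
  have hExzmem : ∀ e ∈ ExzF, e ∈ T1 ∧ vE1v e ∈ B1 := by
    intro e he
    rw [hExzFdef, Finset.mem_image] at he
    obtain ⟨b, _, rfl⟩ := he
    exact ⟨(hExzspec b).1, by rw [(hExzspec b).2]; exact b.2⟩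
  have hExzcard : ExzF.card = B1.card := by
    rw [hExzFdef, Finset.card_image_of_injOn, Finset.card_attach]
    intro b _ b' _ h
    have h' : Classical.choose (hB1pre b.1 b.2) = Classical.choose (hB1pre b'.1 b'.2) := h
    apply Subtype.ext
    rw [← (hExzspec b).2, ← (hExzspec b').2, h']
  set EzyF : Finset ε :=
    B2.attach.image (fun b => Classical.choose (hB2pre b.1 b.2)) with hEzyFdef
  have hEzyspec : ∀ b : {b // b ∈ B2}, Classical.choose (hB2pre b.1 b.2) ∈ T2 ∧
      vE2v (Classical.choose (hB2pre b.1 b.2)) = b.1 :=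
    fun b => Classical.choose_spec (hB2pre b.1 b.2)
  have hEzymem : ∀ e ∈ EzyF, e ∈ T2 ∧ vE2v e ∈ B2 := by
    intro e he
    rw [hEzyFdef, Finset.mem_image] at he
    obtain ⟨b, _, rfl⟩ := he
    exact ⟨(hEzyspec b).1, by rw [(hEzyspec b).2]; exact b.2⟩
  have hEzycard : EzyF.card = B2.card := by
    rw [hEzyFdef, Finset.card_image_of_injOn, Finset.card_attach]
    intro b _ b' _ h
    have h' : Classical.choose (hB2pre b.1 b.2) = Classical.choose (hB2pre b'.1 b'.2) := h
    apply Subtype.ext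
    rw [← (hEzyspec b).2, ← (hEzyspec b').2, h']
  refine ⟨LxF, LyF, ExzF, EzyF, ?_, ?_, ?_, ?_, ?_, ?_, ?_, ?_, ?_, ?_, ?_, ?_⟩
  · rw [← Finset.card_pos, hLxcard]
    exact Finset.card_pos.2 ⟨a0, ha0Bx⟩
  · rw [← Finset.card_pos, hLycard]
    exact Finset.card_pos.2 ⟨c0, hc0By⟩
  · intro A hA B hB
    exact hKxlam A (hLxmem A hA).1 B (hLxmem B hB).1
  · intro A hA B hB
    exact hKylam A (hLymem A hA).1 B (hLymem B hB).1
  · intro U hU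
    have h := hKxF (hLxmem U hU).1
    rw [hFxdef, Finset.mem_filter] at h
    exact h.2
  · intro U hU
    have h := hKyF (hLymem U hU).1
    rw [hFydef, Finset.mem_filter] at h
    exact h.2
  · intro e he
    exact Finset.mem_of_mem_filter _ (hExzmem e he).1
  · intro e he
    have h := (hExzmem e he).1
    rw [hT1def, Finset.mem_filter] at h
    exact h.2
  · intro e he
    exact Finset.mem_of_mem_filter _ (hEzymem e he).1
  · intro e he
    have h := (hEzymem e he).1
    rw [hT2def, Finset.mem_filter] at h
    exact h.2
  · have hBz1 : Bz.card = 1 := by rw [hBz_eq]; exact Finset.card_singleton _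
    omega
  · have hGmem : ∀ i : {U // U ∈ LxF} ⊕ ({U // U ∈ LyF} ⊕
        ({e // e ∈ ExzF} ⊕ ({e // e ∈ EzyF} ⊕ Unit))),
        Sum.elim (fun U : {U // U ∈ LxF} => ((chi (edgesIn pX EX U.1), 0, 0) : Trip ε))
          (Sum.elim (fun U : {U // U ∈ LyF} => ((0, 0, chi (edgesIn pY EY U.1)) : Trip ε))
            (Sum.elim (fun e : {e // e ∈ ExzF} => ((-(chi {e.1}), chi {e.1}, 0) : Trip ε))
              (Sum.elim (fun e : {e // e ∈ EzyF} => ((0, chi {e.1}, -(chi {e.1})) : Trip ε))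
                (fun _ : Unit => ((0, chi EZ, 0) : Trip ε))))) i ∈ B := by
      intro i
      rcases i with U | U | e | e | u
      · exact hmemBf.1 (Finset.mem_of_mem_filter _ (hLxmem U.1 U.2).2)
      · exact hmemBf.1 (Finset.mem_of_mem_filter _ (hLymem U.1 U.2).2)
      · exact hmemBf.1 (Finset.mem_of_mem_filter _ (hExzmem e.1 e.2).2)
      · exact hmemBf.1 (Finset.mem_of_mem_filter _ (hEzymem e.1 e.2).2)
      · exact hmemBf.1 (Finset.mem_of_mem_filter _ (hBz_eq ▸ Finset.mem_singleton_self (vZvv EZ)))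
    have hinj : Function.Injective (fun i => (⟨_, hGmem i⟩ : B)) := by
      intro i j hij
      have h := congrArg Subtype.val hij
      simp only at h
      rcases i with U | U | e | e | u <;> rcases j with U' | U' | e' | e' | u' <;>
        simp only [Sum.elim_inl, Sum.elim_inr] at h
      · exact congrArg Sum.inl (Subtype.ext (hLxinj U.1 U.2 U'.1 U'.2 h))
      · have hzero := vXv_eq_vYv_zero pX EX pY EY U.1 U'.1 h
        exact absurd (hzero ▸ hmemBf.1 (Finset.mem_of_mem_filter _ (hLxmem U.1 U.2).2)) h0B
      · exact absurd h (vXv_ne_vE1v pX EX U.1 e'.1)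
      · exact absurd h (vXv_ne_vE2v pX EX U.1 e'.1)
      · exact absurd h (vXv_ne_vZvv pX EX U.1 hEZne)
      · have hzero := vXv_eq_vYv_zero pX EX pY EY U'.1 U.1 h.symm
        exact absurd (hzero ▸ hmemBf.1 (Finset.mem_of_mem_filter _ (hLxmem U'.1 U'.2).2)) h0B
      · exact congrArg (fun t => Sum.inr (Sum.inl t)) (Subtype.ext (hLyinj U.1 U.2 U'.1 U'.2 h))
      · exact absurd h (vYv_ne_vE1v pY EY U.1 e'.1)
      · exact absurd h (vYv_ne_vE2v pY EY U.1 e'.1)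
      · exact absurd h (vYv_ne_vZvv pY EY U.1 hEZne)
      · exact absurd h.symm (vXv_ne_vE1v pX EX U'.1 e.1)
      · exact absurd h.symm (vYv_ne_vE1v pY EY U'.1 e.1)
      · exact congrArg (fun t => Sum.inr (Sum.inr (Sum.inl t))) (Subtype.ext (vE1v_inj h))
      · exact absurd h (vE1v_ne_vE2v e.1 e'.1)
      · exact absurd h (vE1v_ne_vZvv e.1 EZ)
      · exact absurd h.symm (vXv_ne_vE2v pX EX U'.1 e.1)
      · exact absurd h.symm (vYv_ne_vE2v pY EY U'.1 e.1)
      · exact absurd h.symm (vE1v_ne_vE2v e'.1 e.1)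
      · exact congrArg (fun t => Sum.inr (Sum.inr (Sum.inr (Sum.inl t)))) (Subtype.ext (vE2v_inj h))
      · exact absurd h (vE2v_ne_vZvv e.1 EZ)
      · exact absurd h.symm (vXv_ne_vZvv pX EX U'.1 hEZne)
      · exact absurd h.symm (vYv_ne_vZvv pY EY U'.1 hEZne)
      · exact absurd h.symm (vE1v_ne_vZvv e'.1 EZ)
      · exact absurd h.symm (vE2v_ne_vZvv e'.1 EZ)
      · exact congrArg (fun t => Sum.inr (Sum.inr (Sum.inr (Sum.inr t)))) (Subsingleton.elim u u')
    exact hBli.comp (fun i => ⟨_, hGmem i⟩) hinj
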